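/- arXiv:1401.2168 — 4 statements merged into one kernel-verified Lean document; each statement's English description precedes it below -/
import Mathlib

section
/- If the function c : X×A → ℝ ∪ {+∞} is bounded from below on X×A and, for each fixed x ∈ X, the function a ↦ c(x,a) is inf-compact on A, then the function c̄ : P(X)×A → ℝ ∪ {+∞}, defined by c̄(z,a) = ∫_X c(x,a) z(dx), is bounded from below on P(X)×A and, for each fixed z ∈ P(X), the function a ↦ c̄(z,a) is inf-compact on A. -/
open MeasureTheory Filter Topology
open scoped ENNReal NNReal

/-- The nonnegative part of an extended real number, as an element of `[0,∞]`. -/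
noncomputable def erealPart (x : EReal) : ℝ≥0∞ :=
  if x = ⊤ then ⊤ else ENNReal.ofReal x.toReal

/-- The Lebesgue integral of an `ℝ ∪ {±∞}`-valued function `f`, defined as `∫ f⁺ − ∫ f⁻`. -/
noncomputable def eIntegral {S : Type*} [MeasurableSpace S] (μ : Measure S)
    (f : S → EReal) : EReal :=
  ((∫⁻ s, erealPart (f s) ∂μ : ℝ≥0∞) : EReal) - ((∫⁻ s, erealPart (-f s) ∂μ : ℝ≥0∞) : EReal)

/-- The one-step cost `c̄(z,a) = ∫_X c(x,a) z(dx)` of the COMDP. -/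
noncomputable def cbar {X A : Type*} [MeasurableSpace X]
    (c : X × A → EReal) (z : ProbabilityMeasure X) (a : A) : EReal :=
  eIntegral (z : Measure X) fun x => c (x, a)

lemma erealPart_mono : Monotone erealPart := by
  intro x y h
  unfold erealPart
  rcases eq_or_ne y ⊤ with hy | hy
  · simp [hy]
  · have hx : x ≠ ⊤ := fun hx => hy (top_le_iff.mp (hx ▸ h))
    rw [if_neg hx, if_neg hy]
    rcases eq_or_ne x ⊥ with hb | hb
    · simp [hb, EReal.toReal_bot]
    · exact ENNReal.ofReal_le_ofReal (EReal.toReal_le_toReal h hb hy)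

lemma erealPart_coe (r : ℝ) : erealPart (r : EReal) = ENNReal.ofReal r := by
  simp [erealPart, EReal.toReal_coe]

lemma erealPart_top : erealPart ⊤ = ⊤ := by simp [erealPart]

lemma erealPart_bot : erealPart ⊥ = 0 := by simp [erealPart]

lemma erealPart_le_ofReal_iff {y : EReal} {r : ℝ} (hr : 0 ≤ r) :
    erealPart y ≤ ENNReal.ofReal r ↔ y ≤ (r : EReal) := by
  induction y using EReal.rec with
  | bot => simp [erealPart_bot]
  | coe s =>
      rw [erealPart_coe, ENNReal.ofReal_le_ofReal_iff hr, EReal.coe_le_coe_iff]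
  | top => simp [erealPart_top, ENNReal.ofReal_lt_top.ne]

lemma coe_ennreal_eq_coe_toReal {x : ℝ≥0∞} (hx : x ≠ ⊤) :
    (x : EReal) = ((x.toReal : ℝ) : EReal) := by
  lift x to ℝ≥0 using hx
  rw [EReal.coe_nnreal_eq_coe_real, ENNReal.coe_toReal]

lemma measurable_erealPart_sub (K : ℝ) :
    Measurable (fun y : EReal => erealPart (y - (K : EReal))) := by
  have : Monotone (fun y : EReal => erealPart (y - (K : EReal))) := by
    intro x y h
    exact erealPart_mono (EReal.sub_le_sub h le_rfl)
  exact this.measurable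

lemma measurable_erealPart_neg :
    Measurable (fun y : EReal => erealPart (-y)) := by
  have : Antitone (fun y : EReal => erealPart (-y)) := by
    intro x y h
    exact erealPart_mono (EReal.neg_le_neg_iff.mpr h)
  exact this.measurable

lemma measurable_erealPart : Measurable erealPart := erealPart_mono.measurable

lemma eIntegral_eq_lintegral_add {X : Type*} [MeasurableSpace X] (μ : Measure X)
    [IsProbabilityMeasure μ] (f : X → EReal) (hf : Measurable f)
    (K : ℝ) (hK : K ≤ 0) (hbdd : ∀ x, (K : EReal) ≤ f x) :
    eIntegral μ f = ((∫⁻ x, erealPart (f x - (K : EReal)) ∂μ : ℝ≥0∞) : EReal) + (K : EReal) := by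
  have hm1 : Measurable fun x => erealPart (f x - (K : EReal)) :=
    (measurable_erealPart_sub K).comp hf
  have hm2 : Measurable fun x => erealPart (-(f x)) := measurable_erealPart_neg.comp hf
  have hm3 : Measurable fun x => erealPart (f x) := measurable_erealPart.comp hf
  have hpt : ∀ y : EReal, (K : EReal) ≤ y → erealPart (y - (K : EReal)) + erealPart (-y)
      = erealPart y + ENNReal.ofReal (-K) := by
    intro y hy
    have hb : y ≠ ⊥ := fun h => by simpa [h] using hy
    rcases eq_or_ne y ⊤ with ht | ht
    · rw [ht, EReal.top_sub_coe, erealPart_top]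
      simp
    · lift y to ℝ using ⟨ht, hb⟩ with r hr
      have hKr : K ≤ r := EReal.coe_le_coe_iff.mp hy
      rw [← EReal.coe_sub, ← EReal.coe_neg, erealPart_coe, erealPart_coe, erealPart_coe]
      rcases le_or_gt 0 r with h0 | h0
      · rw [ENNReal.ofReal_of_nonpos (show -r ≤ 0 by linarith), add_zero, sub_eq_add_neg,
          ENNReal.ofReal_add h0 (by linarith)]
      · rw [ENNReal.ofReal_of_nonpos h0.le, zero_add,
          ← ENNReal.ofReal_add (by linarith) (by linarith)]
        ring_nf
  have hint : (∫⁻ x, erealPart (f x - (K : EReal)) ∂μ) + (∫⁻ x, erealPart (-(f x)) ∂μ)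
      = (∫⁻ x, erealPart (f x) ∂μ) + ENNReal.ofReal (-K) := by
    calc (∫⁻ x, erealPart (f x - (K : EReal)) ∂μ) + (∫⁻ x, erealPart (-(f x)) ∂μ)
        = ∫⁻ x, (erealPart (f x - (K : EReal)) + erealPart (-(f x))) ∂μ :=
          (lintegral_add_left hm1 _).symm
      _ = ∫⁻ x, (erealPart (f x) + ENNReal.ofReal (-K)) ∂μ :=
          lintegral_congr fun x => hpt (f x) (hbdd x)
      _ = (∫⁻ x, erealPart (f x) ∂μ) + ENNReal.ofReal (-K) := by
          rw [lintegral_add_right _ measurable_const, lintegral_const, measure_univ, mul_one]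
  set A := ∫⁻ x, erealPart (f x - (K : EReal)) ∂μ with hA
  set B := ∫⁻ x, erealPart (-(f x)) ∂μ with hB
  set C := ∫⁻ x, erealPart (f x) ∂μ with hC
  have hBle : B ≤ ENNReal.ofReal (-K) := by
    refine le_trans (lintegral_mono fun x => ?_)
      (le_of_eq (by rw [lintegral_const, measure_univ, mul_one]))
    refine (erealPart_le_ofReal_iff (by linarith)).mpr ?_
    rw [EReal.coe_neg]
    exact EReal.neg_le_neg_iff.mpr (hbdd x)
  have hBtop : B ≠ ⊤ := (lt_of_le_of_lt hBle ENNReal.ofReal_lt_top).ne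
  show (C : EReal) - (B : EReal) = (A : EReal) + (K : EReal)
  rcases eq_or_ne A ⊤ with hAt | hAt
  · have hCt : C = ⊤ := by
      by_contra hCt
      have h1 : C + ENNReal.ofReal (-K) ≠ ⊤ :=
        ENNReal.add_ne_top.mpr ⟨hCt, ENNReal.ofReal_ne_top⟩
      rw [← hint, hAt] at h1
      simp at h1
    rw [hCt, hAt, EReal.coe_ennreal_top, coe_ennreal_eq_coe_toReal hBtop,
      EReal.top_sub_coe, EReal.top_add_coe]
  · have hCt : C ≠ ⊤ := by
      intro h
      have h1 : A + B ≠ ⊤ := ENNReal.add_ne_top.mpr ⟨hAt, hBtop⟩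
      rw [hint, h] at h1
      simp at h1
    have htr := congrArg ENNReal.toReal hint
    rw [ENNReal.toReal_add hAt hBtop, ENNReal.toReal_add hCt ENNReal.ofReal_ne_top,
      ENNReal.toReal_ofReal (by linarith)] at htr
    rw [coe_ennreal_eq_coe_toReal hAt, coe_ennreal_eq_coe_toReal hBtop,
      coe_ennreal_eq_coe_toReal hCt, ← EReal.coe_sub, ← EReal.coe_add, EReal.coe_eq_coe_iff]
    linarith

/-- **Theorem (preservation of inf-compactness in the action variable).**
If `c : X×A → ℝ ∪ {+∞}` is bounded below and, for each fixed `x ∈ X`, `a ↦ c(x,a)` is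
inf-compact on `A`, then `c̄(z,a) = ∫_X c(x,a) z(dx)` is bounded below and, for each
fixed `z ∈ P(X)`, `a ↦ c̄(z,a)` is inf-compact on `A`. -/
theorem cbar_infCompact_in_action {X A : Type*}
    [MetricSpace X] [SecondCountableTopology X] [MeasurableSpace X] [BorelSpace X]
    [MetricSpace A] [SecondCountableTopology A] [MeasurableSpace A] [BorelSpace A]
    (c : X × A → EReal) (hcmeas : Measurable c)
    (K : ℝ) (hbdd : ∀ p, (K : EReal) ≤ c p)
    (hinf : ∀ x : X, ∀ lam : ℝ, IsCompact {a : A | c (x, a) ≤ (lam : EReal)}) :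
    (∀ (z : ProbabilityMeasure X) (a : A), (K : EReal) ≤ cbar c z a) ∧
    ∀ z : ProbabilityMeasure X, ∀ lam : ℝ,
      IsCompact {a : A | cbar c z a ≤ (lam : EReal)} := by
  set K₀ : ℝ := min K 0 with hK0def
  have hK0le : K₀ ≤ 0 := min_le_right _ _
  have hK0K : K₀ ≤ K := min_le_left _ _
  have hb0 : ∀ p, (K₀ : EReal) ≤ c p := fun p =>
    le_trans (EReal.coe_le_coe_iff.mpr hK0K) (hbdd p)
  have hsec : ∀ a : A, Measurable fun x => c (x, a) := fun a =>
    hcmeas.comp (measurable_id.prodMk measurable_const)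
  have hga : ∀ a : A, Measurable fun x => erealPart (c (x, a) - (K₀ : EReal)) := fun a =>
    (measurable_erealPart_sub K₀).comp (hsec a)
  have hid : ∀ (z : ProbabilityMeasure X) (a : A),
      cbar c z a = ((∫⁻ x, erealPart (c (x, a) - (K₀ : EReal)) ∂(z : Measure X) : ℝ≥0∞) : EReal)
        + (K₀ : EReal) := fun z a =>
    eIntegral_eq_lintegral_add _ _ (hsec a) K₀ hK0le (fun x => hb0 (x, a))
  -- boundedness
  have hbound : ∀ (z : ProbabilityMeasure X) (a : A), (K : EReal) ≤ cbar c z a := by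
    intro z a
    rw [hid z a]
    have h1 : ENNReal.ofReal (K - K₀)
        ≤ ∫⁻ x, erealPart (c (x, a) - (K₀ : EReal)) ∂(z : Measure X) := by
      calc ENNReal.ofReal (K - K₀)
          = ∫⁻ _, ENNReal.ofReal (K - K₀) ∂(z : Measure X) := by
            rw [lintegral_const, measure_univ, mul_one]
        _ ≤ ∫⁻ x, erealPart (c (x, a) - (K₀ : EReal)) ∂(z : Measure X) := by
            refine lintegral_mono fun x => ?_
            rw [← erealPart_coe (K - K₀)]
            refine erealPart_mono ?_
            rw [EReal.coe_sub]
            exact EReal.sub_le_sub (hbdd (x, a)) le_rfl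
    calc (K : EReal) = ((K - K₀ : ℝ) : EReal) + (K₀ : EReal) := by
          rw [← EReal.coe_add]; norm_num
      _ ≤ ((ENNReal.ofReal (K - K₀) : ℝ≥0∞) : EReal) + (K₀ : EReal) := by
          refine add_le_add_left ?_ _
          rw [EReal.coe_ennreal_ofReal]
          exact EReal.coe_le_coe_iff.mpr (le_max_left _ _)
      _ ≤ _ := add_le_add_left (EReal.coe_ennreal_le_coe_ennreal_iff.mpr h1) _
  refine ⟨hbound, fun z lam => ?_⟩
  -- sublevel sets of the integrand are closed
  have hclosed : ∀ (x : X) (t : ℝ≥0∞),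
      IsClosed {a : A | erealPart (c (x, a) - (K₀ : EReal)) ≤ t} := by
    intro x t
    rcases eq_or_ne t ⊤ with ht | ht
    · simp [ht]
    · obtain ⟨r, hr0, rfl⟩ : ∃ r : ℝ, 0 ≤ r ∧ t = ENNReal.ofReal r :=
        ⟨t.toReal, ENNReal.toReal_nonneg, (ENNReal.ofReal_toReal ht).symm⟩
      have heq : {a : A | erealPart (c (x, a) - (K₀ : EReal)) ≤ ENNReal.ofReal r}
          = {a : A | c (x, a) ≤ ((r + K₀ : ℝ) : EReal)} := by
        ext a
        rw [Set.mem_setOf_eq, Set.mem_setOf_eq, erealPart_le_ofReal_iff hr0,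
          EReal.sub_le_iff_le_add (Or.inl (EReal.coe_ne_bot _)) (Or.inl (EReal.coe_ne_top _)),
          ← EReal.coe_add]
      rw [heq]
      exact (hinf x _).isClosed
  -- sequential lower semicontinuity of the integrand in a
  have hliminf : ∀ (x : X) (v : ℕ → A) (b : A), Tendsto v atTop (𝓝 b) →
      erealPart (c (x, b) - (K₀ : EReal))
        ≤ liminf (fun k => erealPart (c (x, v k) - (K₀ : EReal))) atTop := by
    intro x v b hv
    by_contra hcon
    push_neg at hcon
    obtain ⟨t, ht1, ht2⟩ := exists_between hcon
    have hfreq : ∃ᶠ k in atTop, v k ∈ {a : A | erealPart (c (x, a) - (K₀ : EReal)) ≤ t} :=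
      (frequently_lt_of_liminf_lt (by isBoundedDefault) ht1).mono fun k hk => le_of_lt hk
    exact absurd ((hclosed x t).mem_of_frequently_of_tendsto hfreq hv) (not_le.mpr ht2)
  -- sequential lower semicontinuity of g
  set g : A → ℝ≥0∞ := fun a => ∫⁻ x, erealPart (c (x, a) - (K₀ : EReal)) ∂(z : Measure X)
    with hgdef
  have hglsc : ∀ (v : ℕ → A) (b : A), Tendsto v atTop (𝓝 b) →
      g b ≤ liminf (fun k => g (v k)) atTop := by
    intro v b hv
    calc g b ≤ ∫⁻ x, liminf (fun k => erealPart (c (x, v k) - (K₀ : EReal))) atTop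
          ∂(z : Measure X) := lintegral_mono fun x => hliminf x v b hv
      _ ≤ liminf (fun k => g (v k)) atTop := lintegral_liminf_le fun k => hga (v k)
  rcases Set.eq_empty_or_nonempty {a : A | cbar c z a ≤ (lam : EReal)} with he | ⟨a₀, ha₀⟩
  · rw [he]; exact isCompact_empty
  have hKlam : K₀ ≤ lam := by
    have h1 : (K₀ : EReal) ≤ (lam : EReal) :=
      le_trans (le_trans (EReal.coe_le_coe_iff.mpr hK0K) (hbound z a₀)) ha₀
    exact EReal.coe_le_coe_iff.mp h1
  set L : ℝ≥0∞ := ENNReal.ofReal (lam - K₀) with hLdef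
  have hLtop : L ≠ ⊤ := ENNReal.ofReal_ne_top
  have hDset : {a : A | cbar c z a ≤ (lam : EReal)} = {a : A | g a ≤ L} := by
    ext a
    rw [Set.mem_setOf_eq, Set.mem_setOf_eq, hid z a]
    constructor
    · intro h
      have h2 : (g a : EReal) ≤ ((lam - K₀ : ℝ) : EReal) := by
        have h3 := EReal.sub_le_sub h (le_refl (K₀ : EReal))
        rwa [EReal.add_sub_cancel_right, ← EReal.coe_sub] at h3
      rw [← EReal.coe_ennreal_le_coe_ennreal_iff]
      refine le_trans h2 ?_
      show ((lam - K₀ : ℝ) : EReal) ≤ ((ENNReal.ofReal (lam - K₀) : ℝ≥0∞) : EReal)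
      rw [EReal.coe_ennreal_ofReal]
      exact EReal.coe_le_coe_iff.mpr (le_max_left _ _)
    · intro h
      have h2 : (g a : EReal) ≤ ((lam - K₀ : ℝ) : EReal) := by
        calc (g a : EReal) ≤ (L : EReal) := EReal.coe_ennreal_le_coe_ennreal_iff.mpr h
          _ = ((lam - K₀ : ℝ) : EReal) := by
              rw [hLdef, EReal.coe_ennreal_ofReal, max_eq_left (by linarith)]
      calc (g a : EReal) + (K₀ : EReal) ≤ ((lam - K₀ : ℝ) : EReal) + (K₀ : EReal) :=
            add_le_add_left h2 _
        _ = (lam : EReal) := by rw [← EReal.coe_add]; norm_num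
  rw [hDset]
  -- the sublevel set of g is sequentially compact
  have hseq : IsSeqCompact {a : A | g a ≤ L} := by
    intro u hu
    set t : ℝ≥0∞ := 2 * (L + 1) with htdef
    have ht0 : t ≠ 0 := by
      rw [htdef]
      exact mul_ne_zero two_ne_zero (by simp)
    have httop : t ≠ ⊤ := by
      rw [htdef]
      exact ENNReal.mul_ne_top (by norm_num) (ENNReal.add_ne_top.mpr ⟨hLtop, ENNReal.one_ne_top⟩)
    set B : ℕ → Set X := fun n => {x | erealPart (c (x, u n) - (K₀ : EReal)) < t} with hBdef
    have hBmeas : ∀ n, MeasurableSet (B n) := fun n =>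
      measurableSet_lt (hga (u n)) measurable_const
    have hBhalf : ∀ n, (2 : ℝ≥0∞)⁻¹ ≤ (z : Measure X) (B n) := by
      intro n
      have h1 : (z : Measure X) {x | t ≤ erealPart (c (x, u n) - (K₀ : EReal))} ≤ 2⁻¹ := by
        calc (z : Measure X) {x | t ≤ erealPart (c (x, u n) - (K₀ : EReal))}
            ≤ g (u n) / t := meas_ge_le_lintegral_div (hga (u n)).aemeasurable ht0 httop
          _ ≤ L / t := ENNReal.div_le_div_right (hu n) t
          _ ≤ 2⁻¹ := by
              rw [ENNReal.div_le_iff ht0 httop, htdef, ← mul_assoc,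
                ENNReal.inv_mul_cancel two_ne_zero (by norm_num), one_mul]
              exact le_self_add
      have hcompl : (z : Measure X) (B n)ᶜ ≤ 2⁻¹ := by
        refine le_trans (measure_mono fun x hx => ?_) h1
        simpa [hBdef, not_lt] using hx
      have h2 := measure_compl (hBmeas n) (measure_ne_top (z : Measure X) _)
      rw [h2, measure_univ] at hcompl
      have h3 : (1 : ℝ≥0∞) ≤ 2⁻¹ + (z : Measure X) (B n) := by
        exact tsub_le_iff_right.mp hcompl
      calc (2 : ℝ≥0∞)⁻¹ = 1 - 2⁻¹ := ENNReal.one_sub_inv_two.symm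
        _ ≤ (z : Measure X) (B n) := tsub_le_iff_left.mpr h3
    set T : ℕ → Set X := fun N => ⋃ n ∈ Set.Ici N, B n with hTdef
    have hTmeas : ∀ N, MeasurableSet (T N) := fun N =>
      MeasurableSet.biUnion (Set.to_countable _) fun n _ => hBmeas n
    have hTanti : Antitone T := fun M N h =>
      Set.biUnion_subset_biUnion_left (Set.Ici_subset_Ici.mpr h)
    have hThalf : ∀ N, (2 : ℝ≥0∞)⁻¹ ≤ (z : Measure X) (T N) := fun N =>
      le_trans (hBhalf N) (measure_mono (Set.subset_biUnion_of_mem (Set.mem_Ici.mpr le_rfl)))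
    have hnon : (⋂ N, T N).Nonempty := by
      rw [Set.nonempty_iff_ne_empty]
      intro hemp
      have htd := tendsto_measure_iInter_atTop (μ := (z : Measure X))
        (fun N => (hTmeas N).nullMeasurableSet) hTanti ⟨0, measure_ne_top _ _⟩
      rw [hemp] at htd
      simp only [Function.comp_def, measure_empty] at htd
      have hle : (2 : ℝ≥0∞)⁻¹ ≤ 0 := ge_of_tendsto htd (Eventually.of_forall hThalf)
      simp at hle
    obtain ⟨x₀, hx₀⟩ := hnon
    have hfreq : ∃ᶠ n in atTop, x₀ ∈ B n := by
      rw [frequently_atTop]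
      intro N
      obtain ⟨n, hn, hmem⟩ := Set.mem_iUnion₂.mp (Set.mem_iInter.mp hx₀ N)
      exact ⟨n, hn, hmem⟩
    obtain ⟨φ, hφmono, hφ⟩ := Filter.extraction_of_frequently_atTop hfreq
    set lam' : ℝ := t.toReal + K₀ with hlam'
    have hsub : ∀ k, u (φ k) ∈ {a : A | c (x₀, a) ≤ (lam' : EReal)} := by
      intro k
      have h1 : erealPart (c (x₀, u (φ k)) - (K₀ : EReal)) ≤ ENNReal.ofReal t.toReal := by
        rw [ENNReal.ofReal_toReal httop]
        exact (hφ k).le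
      rw [erealPart_le_ofReal_iff ENNReal.toReal_nonneg,
        EReal.sub_le_iff_le_add (Or.inl (EReal.coe_ne_bot _)) (Or.inl (EReal.coe_ne_top _)),
        ← EReal.coe_add] at h1
      exact h1
    obtain ⟨b, hbmem, ψ, hψmono, hψ⟩ := (hinf x₀ lam').isSeqCompact hsub
    refine ⟨b, ?_, φ ∘ ψ, hφmono.comp hψmono, hψ⟩
    have hlim := hglsc (fun k => u (φ (ψ k))) b hψ
    refine le_trans hlim ?_
    calc liminf (fun k => g (u (φ (ψ k)))) atTop
        ≤ liminf (fun _ : ℕ => L) atTop :=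
          liminf_le_liminf (Eventually.of_forall fun k => hu (φ (ψ k)))
      _ = L := liminf_const L
  exact hseq.isCompact
end

section
/- Let the observation space Y be partitioned into two disjoint Borel subsets Y₁ and Y₂ with Y₁ open in Y. Suppose: (a) the stochastic kernels P on X given X×A and Q on Y given A×X are weakly continuous; (b) the measure R′(·|z,a) restricted to Y₂ is setwise continuous in (z,a), i.e. for every sequence (z⁽ⁿ⁾,a⁽ⁿ⁾) → (z,a) in P(X)×A (with z⁽ⁿ⁾ → z weakly) and every Borel C ⊆ Y₂, R′(C|z⁽ⁿ⁾,a⁽ⁿ⁾) → R′(C|z,a); (c) there exists a stochastic kernel H on X given P(X)×A×Y satisfying the disintegration identity (3.4) such that (i) the restriction of H to P(X)×A×Y₁ is weakly continuous, and (ii) whenever z⁽ⁿ⁾ → z weakly and a⁽ⁿ⁾ → a, there exist a subsequence (z⁽ⁿᵏ⁾,a⁽ⁿᵏ⁾) and a Borel set C ⊆ Y₂ with R′(Y₂∖C|z,a) = 0 such that H(z⁽ⁿᵏ⁾,a⁽ⁿᵏ⁾,y) → H(z,a,y) weakly for all y ∈ C. Then the stochastic kernel q on P(X) given P(X)×A,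 defined by q(D|z,a) = ∫_Y 1{H(z,a,y) ∈ D} R′(dy|z,a), is weakly continuous. -/
open MeasureTheory Filter Topology
open scoped ENNReal NNReal

/-- The joint kernel `R(B×C|z,a) = ∫_X ∫_B Q(C|a,x') P(dx'|x,a) z(dx)` of formula (3.3). -/
noncomputable def Rfun {X Y A : Type*} [MeasurableSpace X] [MeasurableSpace Y]
    (P : X × A → ProbabilityMeasure X) (Q : A × X → ProbabilityMeasure Y)
    (z : ProbabilityMeasure X) (a : A) (B : Set X) (C : Set Y) : ℝ≥0∞ :=
  ∫⁻ x, (∫⁻ x' in B, ((Q (a, x') : Measure Y) C) ∂((P (x, a) : Measure X))) ∂(z : Measure X)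

/-- The marginal observation kernel `R'(dy|z,a)` on `Y` given `P(X)×A`, as a measure. -/
noncomputable def RprimeM {X Y A : Type*} [MeasurableSpace X] [MeasurableSpace Y]
    (P : X × A → ProbabilityMeasure X) (Q : A × X → ProbabilityMeasure Y)
    (z : ProbabilityMeasure X) (a : A) : Measure Y :=
  ((z : Measure X).bind fun x => (P (x, a) : Measure X)).bind fun x' => (Q (a, x') : Measure Y)

/-- The disintegration identity (3.4). -/
def Disint {X Y A : Type*} [MeasurableSpace X] [MeasurableSpace Y]
    (P : X × A → ProbabilityMeasure X) (Q : A × X → ProbabilityMeasure Y)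
    (H : ProbabilityMeasure X × A × Y → ProbabilityMeasure X) : Prop :=
  ∀ (z : ProbabilityMeasure X) (a : A) (B : Set X) (C : Set Y),
    MeasurableSet B → MeasurableSet C →
      Rfun P Q z a B C = ∫⁻ y in C, ((H (z, a, y) : Measure X) B) ∂(RprimeM P Q z a)

/-- The Borel σ-algebra of the weak topology on `P(X)`. -/
noncomputable instance probabilityMeasureMeasurableSpace {X : Type*}
    [MeasurableSpace X] [TopologicalSpace X] [OpensMeasurableSpace X] :
    MeasurableSpace (ProbabilityMeasure X) := borel _

/-- The transition kernel `q(D|z,a) = ∫_Y 1{H(z,a,y) ∈ D} R'(dy|z,a)` of the COMDP. -/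
noncomputable def qker {X Y A : Type*}
    [MeasurableSpace X] [TopologicalSpace X] [OpensMeasurableSpace X] [MeasurableSpace Y]
    (P : X × A → ProbabilityMeasure X) (Q : A × X → ProbabilityMeasure Y)
    (H : ProbabilityMeasure X × A × Y → ProbabilityMeasure X)
    (z : ProbabilityMeasure X) (a : A) : Measure (ProbabilityMeasure X) :=
  (RprimeM P Q z a).map fun y => H (z, a, y)

/-! ### Auxiliary lemmas -/

instance probabilityMeasureBorelSpace {X : Type*}
    [MeasurableSpace X] [TopologicalSpace X] [OpensMeasurableSpace X] :
    BorelSpace (ProbabilityMeasure X) := ⟨rfl⟩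

section AuxLemmas

/-- `a - (d - ε) ≤ (a - d) + ε` in `ℝ≥0∞` (indeed in any ordered sub). -/
lemma aux_sub_sub_le (a d ε : ℝ≥0∞) : a - (d - ε) ≤ (a - d) + ε := by
  rw [tsub_le_iff_right]
  calc a ≤ (a - d) + d := le_tsub_add
    _ ≤ (a - d) + (ε + (d - ε)) := by
        gcongr
        rw [add_comm]
        exact le_tsub_add
    _ = (a - d) + ε + (d - ε) := by ring

/-- Squeeze lemma in `ℝ≥0∞`: if `liminf s ≥ S∞` and `liminf (c - s) ≥ c∞ - S∞` with
`c → c∞` finite and `s ≤ c`, then `s → S∞`. -/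
lemma aux_squeeze {s c : ℕ → ℝ≥0∞} {cl Sl : ℝ≥0∞} (hcl : cl ≠ ∞)
    (hsc : ∀ n, s n ≤ c n) (hS : Sl ≤ cl) (hc : Tendsto c atTop (𝓝 cl))
    (h1 : Sl ≤ atTop.liminf s) (h2 : cl - Sl ≤ atTop.liminf (fun n => c n - s n)) :
    Tendsto s atTop (𝓝 Sl) := by
  refine tendsto_of_le_liminf_of_limsup_le h1 ?_
  refine ENNReal.le_of_forall_pos_le_add fun ε hε _hfin => ?_
  have hε2 : (0:ℝ≥0) < ε / 2 := by positivity
  set δ : ℝ≥0∞ := ((ε / 2 : ℝ≥0) : ℝ≥0∞) with hδdef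
  have hδ0 : δ ≠ 0 := by rw [hδdef]; exact_mod_cast hε2.ne'
  have hδtop : δ ≠ ∞ := ENNReal.coe_ne_top
  have ev1 : ∀ᶠ n in atTop, c n < cl + δ :=
    hc.eventually_lt_const (ENNReal.lt_add_right hcl hδ0)
  have hclS : cl - Sl ≠ ∞ := (tsub_le_self.trans_lt hcl.lt_top).ne
  have ev2 : ∀ᶠ n in atTop, (cl - Sl) - δ ≤ c n - s n := by
    rcases eq_or_ne (cl - Sl) 0 with h0 | h0
    · simp [h0]
    · have hlt : (cl - Sl) - δ < cl - Sl := ENNReal.sub_lt_self hclS h0 hδ0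
      exact (eventually_lt_of_lt_liminf (hlt.trans_le h2)).mono fun n hn => hn.le
  have key : ∀ᶠ n in atTop, s n ≤ Sl + δ + δ := by
    filter_upwards [ev1, ev2] with n h1n h2n
    have hcn : c n ≠ ∞ := (h1n.trans (ENNReal.add_lt_top.mpr ⟨hcl.lt_top, hδtop.lt_top⟩)).ne
    have hsn : s n = c n - (c n - s n) := (ENNReal.sub_sub_cancel hcn (hsc n)).symm
    rw [hsn]
    calc c n - (c n - s n) ≤ (cl + δ) - ((cl - Sl) - δ) := tsub_le_tsub h1n.le h2n
      _ ≤ ((cl + δ) - (cl - Sl)) + δ := aux_sub_sub_le _ _ _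
      _ = Sl + δ + δ := by
          have hsplit : cl + δ = (cl - Sl) + (Sl + δ) := by
            rw [← add_assoc, tsub_add_cancel_of_le hS]
          rw [hsplit, ENNReal.add_sub_cancel_left hclS]
  have hlim := Filter.limsup_le_of_le (by isBoundedDefault) key
  refine hlim.trans (le_of_eq ?_)
  rw [add_assoc]
  congr 1
  rw [hδdef, ← ENNReal.coe_add]
  exact congrArg (fun x : ℝ≥0 => (x : ℝ≥0∞)) (add_halves ε)

variable {S : Type*} [MetricSpace S] [MeasurableSpace S] [BorelSpace S]

/-- Portmanteau for bounded lower semicontinuous `ℝ≥0∞`-valued functions. -/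
lemma aux_lsc_le_liminf {ν : ProbabilityMeasure S} {νs : ℕ → ProbabilityMeasure S}
    (hν : Tendsto νs atTop (𝓝 ν)) {L : S → ℝ≥0∞} (hL : LowerSemicontinuous L)
    {K : ℝ≥0∞} (hK : K ≠ ∞) (hbd : ∀ x, L x ≤ K) :
    ∫⁻ x, L x ∂(ν : Measure S) ≤ atTop.liminf fun n => ∫⁻ x, L x ∂(νs n : Measure S) := by
  set g : S → ℝ := fun x => (L x).toReal with hg
  have hLfin : ∀ x, L x ≠ ∞ := fun x => ((hbd x).trans_lt hK.lt_top).ne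
  have hLg : ∀ x, ENNReal.ofReal (g x) = L x := fun x => ENNReal.ofReal_toReal (hLfin x)
  have hgm : Measurable g := hL.measurable.ennreal_toReal
  have hg0 : 0 ≤ g := fun x => ENNReal.toReal_nonneg
  have hrw : ∀ (m : Measure S), ∫⁻ x, L x ∂m = ∫⁻ x, ENNReal.ofReal (g x) ∂m := fun m =>
    lintegral_congr fun x => (hLg x).symm
  simp only [hrw]
  rw [lintegral_eq_lintegral_meas_lt _ (Eventually.of_forall hg0) hgm.aemeasurable]
  have hrw2 : ∀ n, ∫⁻ x, ENNReal.ofReal (g x) ∂(νs n : Measure S)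
      = ∫⁻ (t : ℝ) in Set.Ioi 0, (νs n : Measure S) {a | t < g a} := fun n =>
    lintegral_eq_lintegral_meas_lt _ (Eventually.of_forall hg0) hgm.aemeasurable
  simp only [hrw2]
  calc ∫⁻ (t : ℝ) in Set.Ioi 0, (ν : Measure S) {a | t < g a}
      ≤ ∫⁻ (t : ℝ) in Set.Ioi 0, atTop.liminf (fun n => (νs n : Measure S) {a | t < g a}) := by
        refine lintegral_mono_ae ?_
        filter_upwards [self_mem_ae_restrict measurableSet_Ioi] with t ht
        have hset : {a | t < g a} = L ⁻¹' Set.Ioi (ENNReal.ofReal t) := by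
          ext a
          simp only [Set.mem_setOf_eq, Set.mem_preimage, Set.mem_Ioi]
          exact (ENNReal.ofReal_lt_iff_lt_toReal (le_of_lt ht) (hLfin a)).symm
        rw [hset]
        exact ProbabilityMeasure.le_liminf_measure_open_of_tendsto hν
          (hL.isOpen_preimage (ENNReal.ofReal t))
    _ ≤ atTop.liminf fun n => ∫⁻ (t : ℝ) in Set.Ioi 0, (νs n : Measure S) {a | t < g a} :=
        lintegral_liminf_le fun n => Antitone.measurable fun s t hst =>
          measure_mono fun ω hω => lt_of_le_of_lt hst hω

/-- Fatou's lemma for weakly converging probability measures and "continuously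
lim-inf-dominated" integrands. -/
lemma aux_fatou_weak {ν : ProbabilityMeasure S} {νs : ℕ → ProbabilityMeasure S}
    (hν : Tendsto νs atTop (𝓝 ν)) (v : S → ℝ≥0∞) (vs : ℕ → S → ℝ≥0∞)
    {K : ℝ≥0∞} (hK : K ≠ ∞) (hbd : ∀ n x, vs n x ≤ K)
    (hcc : ∀ (x : S) (xs : ℕ → S), Tendsto xs atTop (𝓝 x) →
      v x ≤ atTop.liminf fun n => vs n (xs n)) :
    ∫⁻ x, v x ∂(ν : Measure S) ≤ atTop.liminf fun n => ∫⁻ x, vs n x ∂(νs n : Measure S) := by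
  -- the lower semicontinuous minorants
  set L : ℕ → S → ℝ≥0∞ := fun N x =>
    ⨆ (δ : ℝ) (_ : 0 < δ), ⨅ (n : ℕ) (_ : N ≤ n) (x' : S) (_ : x' ∈ Metric.ball x δ), vs n x'
    with hLdef
  have hLlsc : ∀ N, LowerSemicontinuous (L N) := by
    intro N x c hc
    rw [hLdef] at hc
    simp only [lt_iSup_iff] at hc
    obtain ⟨δ, hδ, hcδ⟩ := hc
    have hmem : Metric.ball x (δ/2) ∈ 𝓝 x := Metric.ball_mem_nhds x (by positivity)
    filter_upwards [hmem] with u hu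
    have hsub : Metric.ball u (δ/2) ⊆ Metric.ball x δ := by
      intro y hy
      rw [Metric.mem_ball] at *
      calc dist y x ≤ dist y u + dist u x := dist_triangle _ _ _
        _ < δ/2 + δ/2 := by exact add_lt_add hy hu
        _ = δ := by ring
    refine lt_of_lt_of_le hcδ ?_
    refine le_trans ?_ (le_iSup₂ (f := fun (δ' : ℝ) (_ : 0 < δ') =>
      ⨅ (n : ℕ) (_ : N ≤ n) (x' : S) (_ : x' ∈ Metric.ball u δ'), vs n x') (δ/2) (by positivity))
    exact iInf₂_mono fun n hn => le_iInf₂ fun y hy => iInf₂_le y (hsub hy)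
  have hLle : ∀ N n, N ≤ n → ∀ x, L N x ≤ vs n x := by
    intro N n hn x
    refine iSup₂_le fun δ hδ => ?_
    exact le_trans (iInf₂_le n hn) (iInf₂_le x (Metric.mem_ball_self hδ))
  have hLbd : ∀ N x, L N x ≤ K := fun N x => (hLle N N le_rfl x).trans (hbd N x)
  have hLmono : ∀ x, Monotone fun N => L N x := by
    intro x N M hNM
    refine iSup₂_mono fun δ hδ => ?_
    exact le_iInf₂ fun n hn => iInf₂_le n (hNM.trans hn)
  have hsup : ∀ x, v x ≤ ⨆ N, L N x := by
    intro x
    classical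
    by_contra hlt
    push_neg at hlt
    obtain ⟨b, hb1, hb2⟩ := exists_between hlt
    have pick : ∀ k : ℕ, ∃ n, k ≤ n ∧ ∃ x', x' ∈ Metric.ball x (1/((k:ℝ)+1)) ∧ vs n x' < b := by
      intro k
      have h1 : L k x < b := lt_of_le_of_lt (le_iSup (fun N => L N x) k) hb1
      have h2 : (⨅ (n : ℕ) (_ : k ≤ n) (x' : S)
          (_ : x' ∈ Metric.ball x (1/((k:ℝ)+1))), vs n x') < b := by
        refine lt_of_le_of_lt ?_ h1
        exact le_iSup₂ (f := fun (δ : ℝ) (_ : 0 < δ) =>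
          ⨅ (n : ℕ) (_ : k ≤ n) (x' : S) (_ : x' ∈ Metric.ball x δ), vs n x')
          (1/((k:ℝ)+1)) (by positivity)
      simp only [iInf_lt_iff] at h2
      obtain ⟨n, hn, x', hx', hvx'⟩ := h2
      exact ⟨n, hn, x', hx', hvx'⟩
    choose n hn x' hx' hvx' using pick
    -- build a strictly increasing subsequence of indices
    set k : ℕ → ℕ := fun j => Nat.rec 0 (fun _ kj => n kj + 1) j with hkdef
    have hk_succ : ∀ j, k (j+1) = n (k j) + 1 := fun j => rfl
    have hk_ge : ∀ j, j ≤ k j := by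
      intro j
      induction j with
      | zero => exact Nat.zero_le _
      | succ j ih => rw [hk_succ]; have := hn (k j); omega
    have hkmono : Monotone k := monotone_nat_of_le_succ (by
      intro j; rw [hk_succ]; have := hn (k j); omega)
    set m : ℕ → ℕ := fun j => n (k j) with hmdef
    have hmmono : StrictMono m := strictMono_nat_of_lt_succ (by
      intro j
      show n (k j) < n (k (j+1))
      have h1 : k (j+1) = n (k j) + 1 := rfl
      have h2 := hn (k (j+1))
      omega)
    -- the test sequence
    set w : ℕ → S := fun i => if h : ∃ j, m j = i then x' (k h.choose) else x with hwdef
    have hwm : ∀ j, w (m j) = x' (k j) := by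
      intro j
      have h : ∃ j', m j' = m j := ⟨j, rfl⟩
      rw [hwdef]
      simp only [dif_pos h]
      congr 2
      exact hmmono.injective h.choose_spec
    have hwx : Tendsto w atTop (𝓝 x) := by
      rw [Metric.tendsto_atTop]
      intro ε hε
      obtain ⟨J, hJ⟩ := exists_nat_one_div_lt hε
      refine ⟨m J + 1, fun i hi => ?_⟩
      by_cases h : ∃ j, m j = i
      · obtain ⟨j, rfl⟩ := h
        have hjJ : J < j := by
          by_contra hc
          push_neg at hc
          have := hmmono.monotone hc
          omega
        have h1 : dist (w (m j)) x < 1/((k j : ℝ)+1) := by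
          rw [hwm j]
          exact Metric.mem_ball.mp (hx' (k j))
        have h2 : (1:ℝ)/((k j : ℝ)+1) ≤ 1/((J:ℝ)+1) := by
          apply one_div_le_one_div_of_le (by positivity)
          have hnat : J + 1 ≤ k j + 1 := by have := hk_ge j; omega
          exact_mod_cast Nat.cast_le.mpr hnat
        exact lt_of_lt_of_le h1 (h2.trans hJ.le)
      · rw [hwdef]
        simp only [dif_neg h]
        simpa using hε
    have hfreq : ∃ᶠ i in atTop, vs i (w i) ≤ b := by
      refine (hmmono.tendsto_atTop).frequently (Frequently.of_forall fun j => ?_)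
      rw [hwm j]
      exact (hvx' (k j)).le
    have := hcc x w hwx
    have hle := Filter.liminf_le_of_frequently_le hfreq
    exact absurd (this.trans hle) (not_le.mpr hb2)
  -- main chain
  calc ∫⁻ x, v x ∂(ν : Measure S) ≤ ∫⁻ x, ⨆ N, L N x ∂(ν : Measure S) :=
        lintegral_mono fun x => hsup x
    _ = ⨆ N, ∫⁻ x, L N x ∂(ν : Measure S) :=
        lintegral_iSup (fun N => (hLlsc N).measurable) (fun N M hNM x => hLmono x hNM)
    _ ≤ atTop.liminf fun n => ∫⁻ x, vs n x ∂(νs n : Measure S) := by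
        refine iSup_le fun N => ?_
        refine le_trans (aux_lsc_le_liminf hν (hLlsc N) hK (hLbd N)) ?_
        refine Filter.liminf_le_liminf ?_
        filter_upwards [eventually_ge_atTop N] with n hNn
        exact lintegral_mono fun x => hLle N n hNn x

end AuxLemmas

section Aux2

variable {S : Type*} [MetricSpace S] [MeasurableSpace S] [BorelSpace S]

/-- Setwise convergence of measures implies a Fatou-type inequality for lower integrals. -/
lemma aux_setwise_fatou {T : Type*} [MeasurableSpace T] {ν : Measure T} {νs : ℕ → Measure T}
    (h : ∀ E, MeasurableSet E → Tendsto (fun n => νs n E) atTop (𝓝 (ν E)))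
    {w : T → ℝ≥0∞} (hw : Measurable w) :
    ∫⁻ x, w x ∂ν ≤ atTop.liminf fun n => ∫⁻ x, w x ∂νs n := by
  rw [lintegral_eq_iSup_eapprox_lintegral hw]
  refine iSup_le fun N => ?_
  have htd : Tendsto (fun n => (SimpleFunc.eapprox w N).lintegral (νs n)) atTop
      (𝓝 ((SimpleFunc.eapprox w N).lintegral ν)) := by
    simp only [SimpleFunc.lintegral]
    refine tendsto_finset_sum _ fun c hc => ?_
    refine ENNReal.Tendsto.const_mul (h _ (SimpleFunc.measurableSet_preimage _ _)) ?_
    right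
    obtain ⟨a, ha⟩ := SimpleFunc.mem_range.mp hc
    rw [← ha]
    exact (SimpleFunc.eapprox_lt_top w N a).ne
  calc (SimpleFunc.eapprox w N).lintegral ν
      = atTop.liminf fun n => (SimpleFunc.eapprox w N).lintegral (νs n) := htd.liminf_eq.symm
    _ ≤ atTop.liminf fun n => ∫⁻ x, w x ∂νs n := by
        refine Filter.liminf_le_liminf (Eventually.of_forall fun n => ?_)
        rw [← SimpleFunc.lintegral_eq_lintegral]
        refine lintegral_mono fun x => ?_
        exact le_trans (le_iSup (fun N => SimpleFunc.eapprox w N x) N)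
          (le_of_eq (SimpleFunc.iSup_eapprox_apply hw x))

/-- Convergence of lower integrals of a continuously convergent uniformly bounded sequence
of functions against weakly convergent probability measures. -/
lemma aux_tendsto_lintegral_contconv {ν : ProbabilityMeasure S} {νs : ℕ → ProbabilityMeasure S}
    (hν : Tendsto νs atTop (𝓝 ν)) {v : S → ℝ≥0∞} {vs : ℕ → S → ℝ≥0∞}
    {K : ℝ≥0∞} (hK : K ≠ ∞) (hbd : ∀ n x, vs n x ≤ K) (hmeas : ∀ n, Measurable (vs n))
    (hv : Measurable v)
    (hcc : ∀ (x : S) (xs : ℕ → S), Tendsto xs atTop (𝓝 x) →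
      Tendsto (fun n => vs n (xs n)) atTop (𝓝 (v x))) :
    Tendsto (fun n => ∫⁻ x, vs n x ∂(νs n : Measure S)) atTop
      (𝓝 (∫⁻ x, v x ∂(ν : Measure S))) := by
  have hvK : ∀ x, v x ≤ K := fun x =>
    le_of_tendsto (hcc x (fun _ => x) tendsto_const_nhds)
      (Eventually.of_forall fun n => hbd n x)
  have hSle : ∫⁻ x, v x ∂(ν : Measure S) ≤ K := by
    calc ∫⁻ x, v x ∂(ν : Measure S) ≤ ∫⁻ _, K ∂(ν : Measure S) := lintegral_mono hvK
      _ = K := by simp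
  have hsub : ∀ n, ∫⁻ x, K - vs n x ∂(νs n : Measure S)
      = K - ∫⁻ x, vs n x ∂(νs n : Measure S) := by
    intro n
    rw [lintegral_sub (hmeas n) ?fin (Eventually.of_forall (hbd n))]
    · simp
    case fin =>
      refine ne_of_lt (lt_of_le_of_lt ?_ hK.lt_top)
      calc ∫⁻ x, vs n x ∂(νs n : Measure S) ≤ ∫⁻ _, K ∂(νs n : Measure S) :=
            lintegral_mono (hbd n)
        _ = K := by simp
  refine aux_squeeze (c := fun _ => K) hK (fun n => ?_) hSle tendsto_const_nhds ?_ ?_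
  · calc ∫⁻ x, vs n x ∂(νs n : Measure S) ≤ ∫⁻ _, K ∂(νs n : Measure S) :=
        lintegral_mono (hbd n)
      _ = K := by simp
  · exact aux_fatou_weak hν v vs hK hbd fun x xs hxs => (hcc x xs hxs).liminf_eq.symm.le
  · have h2 : ∫⁻ x, K - v x ∂(ν : Measure S)
        ≤ atTop.liminf fun n => ∫⁻ x, K - vs n x ∂(νs n : Measure S) := by
      refine aux_fatou_weak hν (fun x => K - v x) (fun n x => K - vs n x) hK
        (fun n x => tsub_le_self.trans_eq rfl |>.trans (le_refl K) |>.trans (le_refl K)) ?_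
      intro x xs hxs
      exact le_of_eq (((ENNReal.Tendsto.sub tendsto_const_nhds (hcc x xs hxs))
        (Or.inl hK)).liminf_eq).symm
    have h3 : K - ∫⁻ x, v x ∂(ν : Measure S) ≤ ∫⁻ x, K - v x ∂(ν : Measure S) := by
      rw [lintegral_sub hv ?fin (Eventually.of_forall hvK)]
      · simp
      case fin => exact ne_of_lt (lt_of_le_of_lt hSle hK.lt_top)
    refine le_trans (le_trans h3 h2) (le_of_eq ?_)
    exact Filter.liminf_congr (Eventually.of_forall fun n => hsub n)

end Aux2

section RprimeLemmas

variable {X Y A : Type*}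
    [MetricSpace X] [SecondCountableTopology X] [MeasurableSpace X] [BorelSpace X]
    [MetricSpace Y] [SecondCountableTopology Y] [MeasurableSpace Y] [BorelSpace Y]
    [MetricSpace A] [SecondCountableTopology A] [MeasurableSpace A] [BorelSpace A]

lemma aux_isProb_bind {α β : Type*} [MeasurableSpace α] [MeasurableSpace β]
    (μ : Measure α) [IsProbabilityMeasure μ] (κ : α → Measure β) (hκ : Measurable κ)
    (hp : ∀ a, IsProbabilityMeasure (κ a)) : IsProbabilityMeasure (μ.bind κ) := by
  constructor
  rw [Measure.bind_apply MeasurableSet.univ hκ.aemeasurable]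
  have h : ∀ a, κ a Set.univ = 1 := fun a => (hp a).measure_univ
  simp [h]

lemma aux_isProb_Rprime (P : X × A → ProbabilityMeasure X) (Q : A × X → ProbabilityMeasure Y)
    (hPmeas : Measurable fun p => (P p : Measure X))
    (hQmeas : Measurable fun p => (Q p : Measure Y))
    (z : ProbabilityMeasure X) (a : A) : IsProbabilityMeasure (RprimeM P Q z a) := by
  rw [RprimeM]
  haveI : IsProbabilityMeasure ((z : Measure X).bind fun x => (P (x, a) : Measure X)) :=
    aux_isProb_bind _ _ (hPmeas.comp (measurable_id.prodMk measurable_const))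
      fun x => inferInstance
  exact aux_isProb_bind _ _ (hQmeas.comp (measurable_const.prodMk measurable_id))
    fun x => inferInstance

/-- The measure `z ↦ ∫ P(·|x,a) z(dx)` as a probability measure. -/
noncomputable def pmMu (P : X × A → ProbabilityMeasure X)
    (hPmeas : Measurable fun p => (P p : Measure X))
    (z : ProbabilityMeasure X) (a : A) : ProbabilityMeasure X :=
  ⟨(z : Measure X).bind fun x => (P (x, a) : Measure X),
    aux_isProb_bind _ _ (hPmeas.comp (measurable_id.prodMk measurable_const))
      fun x => inferInstance⟩

/-- `R'(·|z,a)` as a probability measure. -/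
noncomputable def pmR (P : X × A → ProbabilityMeasure X) (Q : A × X → ProbabilityMeasure Y)
    (hPmeas : Measurable fun p => (P p : Measure X))
    (hQmeas : Measurable fun p => (Q p : Measure Y))
    (z : ProbabilityMeasure X) (a : A) : ProbabilityMeasure Y :=
  ⟨RprimeM P Q z a, aux_isProb_Rprime P Q hPmeas hQmeas z a⟩

lemma aux_bcf_lintegral_le {α : Type*} [TopologicalSpace α] [MeasurableSpace α]
    [OpensMeasurableSpace α] (μ : Measure α) [IsProbabilityMeasure μ]
    (g : BoundedContinuousFunction α ℝ≥0) :
    ∫⁻ x, (g x : ℝ≥0∞) ∂μ ≤ edist 0 g := by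
  have := BoundedContinuousFunction.lintegral_le_edist_mul g μ
  simpa [measure_univ] using this

lemma aux_mu_tendsto (P : X × A → ProbabilityMeasure X)
    (hPmeas : Measurable fun p => (P p : Measure X)) (hPcont : Continuous P)
    {zs : ℕ → ProbabilityMeasure X} {z : ProbabilityMeasure X} {as : ℕ → A} {a : A}
    (hz : Tendsto zs atTop (𝓝 z)) (ha : Tendsto as atTop (𝓝 a)) :
    Tendsto (fun n => pmMu P hPmeas (zs n) (as n)) atTop (𝓝 (pmMu P hPmeas z a)) := by
  rw [ProbabilityMeasure.tendsto_iff_forall_lintegral_tendsto]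
  intro g
  have hgm : Measurable fun x : X => (g x : ℝ≥0∞) :=
    measurable_coe_nnreal_ennreal.comp g.continuous.measurable
  have hrw : ∀ (w : ProbabilityMeasure X) (b : A),
      ∫⁻ x, (g x : ℝ≥0∞) ∂(pmMu P hPmeas w b : Measure X)
        = ∫⁻ x, (∫⁻ x', (g x' : ℝ≥0∞) ∂(P (x, b) : Measure X)) ∂(w : Measure X) := fun w b =>
    Measure.lintegral_bind (hPmeas.comp (measurable_id.prodMk measurable_const)).aemeasurable hgm.aemeasurable
  simp only [hrw]
  refine aux_tendsto_lintegral_contconv hz (K := edist 0 g) (edist_ne_top 0 g)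
    (fun n x => aux_bcf_lintegral_le _ g)
    (fun n => (Measure.measurable_lintegral hgm).comp
      (hPmeas.comp (measurable_id.prodMk measurable_const)))
    ((Measure.measurable_lintegral hgm).comp
      (hPmeas.comp (measurable_id.prodMk measurable_const))) ?_
  intro x xs hxs
  have hP : Tendsto (fun n => P (xs n, as n)) atTop (𝓝 (P (x, a))) :=
    (hPcont.tendsto _).comp (hxs.prodMk_nhds ha)
  exact ProbabilityMeasure.tendsto_iff_forall_lintegral_tendsto.mp hP g

lemma aux_Rprime_tendsto (P : X × A → ProbabilityMeasure X) (Q : A × X → ProbabilityMeasure Y)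
    (hPmeas : Measurable fun p => (P p : Measure X))
    (hQmeas : Measurable fun p => (Q p : Measure Y))
    (hPcont : Continuous P) (hQcont : Continuous Q)
    {zs : ℕ → ProbabilityMeasure X} {z : ProbabilityMeasure X} {as : ℕ → A} {a : A}
    (hz : Tendsto zs atTop (𝓝 z)) (ha : Tendsto as atTop (𝓝 a)) :
    Tendsto (fun n => pmR P Q hPmeas hQmeas (zs n) (as n)) atTop
      (𝓝 (pmR P Q hPmeas hQmeas z a)) := by
  rw [ProbabilityMeasure.tendsto_iff_forall_lintegral_tendsto]
  intro g
  have hgm : Measurable fun y : Y => (g y : ℝ≥0∞) :=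
    measurable_coe_nnreal_ennreal.comp g.continuous.measurable
  have hrw : ∀ (w : ProbabilityMeasure X) (b : A),
      ∫⁻ y, (g y : ℝ≥0∞) ∂(pmR P Q hPmeas hQmeas w b : Measure Y)
        = ∫⁻ x, (∫⁻ y, (g y : ℝ≥0∞) ∂(Q (b, x) : Measure Y))
            ∂(pmMu P hPmeas w b : Measure X) := fun w b =>
    Measure.lintegral_bind (hQmeas.comp (measurable_const.prodMk measurable_id)).aemeasurable hgm.aemeasurable
  simp only [hrw]
  exact aux_tendsto_lintegral_contconv (aux_mu_tendsto P hPmeas hPcont hz ha)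
    (K := edist 0 g) (edist_ne_top 0 g)
    (fun n x => aux_bcf_lintegral_le _ g)
    (fun n => (Measure.measurable_lintegral hgm).comp
      (hQmeas.comp (measurable_const.prodMk measurable_id)))
    ((Measure.measurable_lintegral hgm).comp
      (hQmeas.comp (measurable_const.prodMk measurable_id)))
    (fun x xs hxs => ProbabilityMeasure.tendsto_iff_forall_lintegral_tendsto.mp
      ((hQcont.tendsto _).comp (ha.prodMk_nhds hxs)) g)

/-- Expression of `∫ f dq(·|z,a)` through a lower integral of a nonnegative integrand. -/
lemma aux_integral_qker (P : X × A → ProbabilityMeasure X) (Q : A × X → ProbabilityMeasure Y)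
    (hPmeas : Measurable fun p => (P p : Measure X))
    (hQmeas : Measurable fun p => (Q p : Measure Y))
    (H : ProbabilityMeasure X × A × Y → ProbabilityMeasure X) (hHmeas : Measurable H)
    (f : BoundedContinuousFunction (ProbabilityMeasure X) ℝ)
    (z : ProbabilityMeasure X) (a : A) :
    ∫ ζ, f ζ ∂(qker P Q H z a)
      = (∫⁻ y, ENNReal.ofReal (f (H (z, a, y)) + ‖f‖) ∂(RprimeM P Q z a)).toReal - ‖f‖ := by
  haveI := aux_isProb_Rprime P Q hPmeas hQmeas z a
  have hsec : Measurable fun y : Y => H (z, a, y) :=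
    hHmeas.comp (measurable_const.prodMk (measurable_const.prodMk measurable_id))
  rw [qker, integral_map hsec.aemeasurable f.continuous.measurable.aestronglyMeasurable]
  have hfm : AEStronglyMeasurable (fun y => f (H (z, a, y))) (RprimeM P Q z a) :=
    (f.continuous.measurable.comp hsec).aestronglyMeasurable
  have hint : Integrable (fun y => f (H (z, a, y))) (RprimeM P Q z a) :=
    Integrable.mono' (integrable_const ‖f‖) hfm
      (Eventually.of_forall fun y => f.norm_coe_le_norm _)
  have h1 : ∫ y, f (H (z, a, y)) ∂(RprimeM P Q z a)
      = ∫ y, (f (H (z, a, y)) + ‖f‖) ∂(RprimeM P Q z a) - ‖f‖ := by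
    rw [integral_add hint (integrable_const _), integral_const]
    simp [measure_univ]
  have hplus : AEStronglyMeasurable (fun y => f (H (z, a, y)) + ‖f‖) (RprimeM P Q z a) :=
    ((f.continuous.measurable.comp hsec).add_const ‖f‖).aestronglyMeasurable
  rw [h1, integral_eq_lintegral_of_nonneg_ae ?nn hplus]
  case nn =>
    refine Eventually.of_forall fun y => ?_
    show (0:ℝ) ≤ f (H (z, a, y)) + ‖f‖
    have hb := f.norm_coe_le_norm (H (z, a, y))
    rw [Real.norm_eq_abs] at hb
    have := (abs_le.mp hb).1
    linarith

end RprimeLemmas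

/-- **Theorem (combining Assumption (H) on `Y₂` with weak continuity of `H` on `Y₁`).**
Let `Y = Y₁ ∪ Y₂` be a partition into disjoint Borel sets with `Y₁` open. If
(a) `P` and `Q` are weakly continuous, (b) `R'(·|z,a)` restricted to `Y₂` is setwise
continuous in `(z,a)`, and (c) there is a stochastic kernel `H` satisfying (3.4) that is
weakly continuous on `P(X)×A×Y₁` and satisfies Assumption (H) on `Y₂`, then the
transition kernel `q` of the COMDP is weakly continuous. -/
theorem qker_weakly_continuous_combined {X Y A : Type*}
    [MetricSpace X] [SecondCountableTopology X] [MeasurableSpace X] [BorelSpace X]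
    [MetricSpace Y] [SecondCountableTopology Y] [MeasurableSpace Y] [BorelSpace Y]
    [MetricSpace A] [SecondCountableTopology A] [MeasurableSpace A] [BorelSpace A]
    (P : X × A → ProbabilityMeasure X) (Q : A × X → ProbabilityMeasure Y)
    (hPmeas : Measurable fun p => (P p : Measure X))
    (hQmeas : Measurable fun p => (Q p : Measure Y))
    (Y₁ Y₂ : Set Y) (hY₁open : IsOpen Y₁) (hY₂meas : MeasurableSet Y₂)
    (hdisj : Disjoint Y₁ Y₂) (hpart : Y₁ ∪ Y₂ = Set.univ)
    -- (a) weak continuity of P and Q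
    (hPcont : Continuous P) (hQcont : Continuous Q)
    -- (b) setwise continuity of R' on subsets of Y₂
    (hR'setwise : ∀ (zs : ℕ → ProbabilityMeasure X) (z : ProbabilityMeasure X)
        (as : ℕ → A) (a : A),
      Tendsto zs atTop (𝓝 z) → Tendsto as atTop (𝓝 a) →
      ∀ C : Set Y, C ⊆ Y₂ → MeasurableSet C →
        Tendsto (fun n => RprimeM P Q (zs n) (as n) C) atTop (𝓝 (RprimeM P Q z a C)))
    -- (c) the filtering kernel H
    (H : ProbabilityMeasure X × A × Y → ProbabilityMeasure X)
    (hHmeas : Measurable H)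
    (hHdis : Disint P Q H)
    -- (c)(i) weak continuity of H on P(X) × A × Y₁
    (hHcont : ContinuousOn H {t : ProbabilityMeasure X × A × Y | t.2.2 ∈ Y₁})
    -- (c)(ii) Assumption (H) on Y₂
    (hH2 : ∀ (zs : ℕ → ProbabilityMeasure X) (z : ProbabilityMeasure X)
        (as : ℕ → A) (a : A),
      Tendsto zs atTop (𝓝 z) → Tendsto as atTop (𝓝 a) →
      ∃ φ : ℕ → ℕ, StrictMono φ ∧ ∃ C : Set Y, C ⊆ Y₂ ∧ MeasurableSet C ∧
        RprimeM P Q z a (Y₂ \ C) = 0 ∧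
        ∀ y ∈ C, Tendsto (fun k => H (zs (φ k), as (φ k), y)) atTop (𝓝 (H (z, a, y)))) :
    ∀ (zs : ℕ → ProbabilityMeasure X) (z : ProbabilityMeasure X) (as : ℕ → A) (a : A),
      Tendsto zs atTop (𝓝 z) → Tendsto as atTop (𝓝 a) →
      ∀ f : BoundedContinuousFunction (ProbabilityMeasure X) ℝ,
        Tendsto (fun n => ∫ ζ, f ζ ∂(qker P Q H (zs n) (as n))) atTop
          (𝓝 (∫ ζ, f ζ ∂(qker P Q H z a))) := by
  intro zs z as a hz ha f
  set M : ℝ := ‖f‖ with hM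
  have hM0 : 0 ≤ M := norm_nonneg f
  set K : ℝ≥0∞ := ENNReal.ofReal (M + M) with hKdef
  have hKtop : K ≠ ∞ := ENNReal.ofReal_ne_top
  set G : ProbabilityMeasure X × A × Y → ℝ≥0∞ := fun t => ENNReal.ofReal (f (H t) + M)
    with hGdef
  have hGbd : ∀ t, G t ≤ K := by
    intro t
    apply ENNReal.ofReal_le_ofReal
    have hb := f.norm_coe_le_norm (H t)
    rw [Real.norm_eq_abs] at hb
    have := (abs_le.mp hb).2
    linarith
  have hGsec : ∀ (z' : ProbabilityMeasure X) (a' : A), Measurable fun y => G (z', a', y) :=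
    fun z' a' =>
      ENNReal.measurable_ofReal.comp ((f.continuous.measurable.comp (hHmeas.comp
        (measurable_const.prodMk (measurable_const.prodMk measurable_id)))).add_const M)
  have hcover : ∀ y, y ∈ Y₁ ∨ y ∈ Y₂ := by
    intro y
    have : y ∈ Y₁ ∪ Y₂ := by rw [hpart]; trivial
    exact this
  have hY₂c : Y₁ = Y₂ᶜ := by
    ext y
    exact ⟨fun h hmem => Set.disjoint_left.mp hdisj h hmem,
      fun h => (hcover y).resolve_right h⟩
  have hY₁meas : MeasurableSet Y₁ := hY₁open.measurableSet
  haveI hRprob : ∀ (z' : ProbabilityMeasure X) (a' : A),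
      IsProbabilityMeasure (RprimeM P Q z' a') := aux_isProb_Rprime P Q hPmeas hQmeas
  have hid : ∀ (z' : ProbabilityMeasure X) (a' : A),
      ∫ ζ, f ζ ∂(qker P Q H z' a')
        = (∫⁻ y, G (z', a', y) ∂(RprimeM P Q z' a')).toReal - M :=
    fun z' a' => aux_integral_qker P Q hPmeas hQmeas H hHmeas f z' a'
  apply Filter.tendsto_of_subseq_tendsto
  intro ns hns
  obtain ⟨φ, hφ, C, hCsub, hCmeas, hC0, hCcv⟩ :=
    hH2 (zs ∘ ns) z (as ∘ ns) a (hz.comp hns) (ha.comp hns)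
  refine ⟨φ, ?_⟩
  set ms : ℕ → ℕ := fun k => ns (φ k) with hmsdef
  have hmst : Tendsto ms atTop atTop := hns.comp hφ.tendsto_atTop
  have hzm : Tendsto (fun k => zs (ms k)) atTop (𝓝 z) := hz.comp hmst
  have ham : Tendsto (fun k => as (ms k)) atTop (𝓝 a) := ha.comp hmst
  set Rm : ℕ → Measure Y := fun k => RprimeM P Q (zs (ms k)) (as (ms k)) with hRmdef
  set Rinf : Measure Y := RprimeM P Q z a with hRinfdef
  haveI : IsProbabilityMeasure Rinf := hRprob z a
  haveI : ∀ k, IsProbabilityMeasure (Rm k) := fun k => hRprob _ _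
  have hsetw : ∀ C' : Set Y, C' ⊆ Y₂ → MeasurableSet C' →
      Tendsto (fun k => Rm k C') atTop (𝓝 (Rinf C')) :=
    fun C' h1 h2 => hR'setwise (fun k => zs (ms k)) z (fun k => as (ms k)) a hzm ham C' h1 h2
  have hweak : Tendsto (fun k => pmR P Q hPmeas hQmeas (zs (ms k)) (as (ms k))) atTop
      (𝓝 (pmR P Q hPmeas hQmeas z a)) :=
    aux_Rprime_tendsto P Q hPmeas hQmeas hPcont hQcont hzm ham
  set Gm : ℕ → Y → ℝ≥0∞ := fun k y => G (zs (ms k), as (ms k), y) with hGmdef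
  set Ginf : Y → ℝ≥0∞ := fun y => G (z, a, y) with hGinfdef
  have hGmmeas : ∀ k, Measurable (Gm k) := fun k => hGsec _ _
  have hGinfmeas : Measurable Ginf := hGsec _ _
  -- convergence of masses
  have hY₂mass : Tendsto (fun k => Rm k Y₂) atTop (𝓝 (Rinf Y₂)) :=
    hsetw Y₂ subset_rfl hY₂meas
  have hY₁mass : Tendsto (fun k => Rm k Y₁) atTop (𝓝 (Rinf Y₁)) := by
    have hc : ∀ (m' : Measure Y) [IsProbabilityMeasure m'], m' Y₁ = 1 - m' Y₂ := by
      intro m' _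
      rw [hY₂c, measure_compl hY₂meas (measure_ne_top m' Y₂)]
      simp [measure_univ]
    simp only [fun k => hc (Rm k), hc Rinf]
    exact ENNReal.Tendsto.sub tendsto_const_nhds hY₂mass (Or.inl ENNReal.one_ne_top)
  -- continuous convergence of Gm on Y₁
  have hccY₁ : ∀ y ∈ Y₁, ∀ (ys : ℕ → Y), Tendsto ys atTop (𝓝 y) →
      Tendsto (fun k => Gm k (ys k)) atTop (𝓝 (Ginf y)) := by
    intro y hy ys hys
    have htrip : Tendsto (fun k => ((zs (ms k) : ProbabilityMeasure X), (as (ms k), ys k)))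
        atTop (𝓝 (z, (a, y))) := hzm.prodMk_nhds (ham.prodMk_nhds hys)
    have hopen : IsOpen {t : ProbabilityMeasure X × A × Y | t.2.2 ∈ Y₁} :=
      hY₁open.preimage (continuous_snd.comp continuous_snd)
    have hH_at : ContinuousAt H (z, a, y) :=
      hHcont.continuousAt (hopen.mem_nhds (by exact hy))
    have h1 : Tendsto (fun k => H (zs (ms k), as (ms k), ys k)) atTop (𝓝 (H (z, a, y))) :=
      hH_at.tendsto.comp htrip
    have h2 : Tendsto (fun k => f (H (zs (ms k), as (ms k), ys k)) + M) atTop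
        (𝓝 (f (H (z, a, y)) + M)) := (((f.continuous.tendsto _).comp h1).add_const M)
    exact (ENNReal.continuous_ofReal.tendsto _).comp h2
  -- a.e. convergence of Gm on Y₂
  have hGcv : ∀ y ∈ C, Tendsto (fun k => Gm k y) atTop (𝓝 (Ginf y)) := by
    intro y hy
    have h1 := hCcv y hy
    have h2 : Tendsto (fun k => f (H (zs (ms k), as (ms k), y)) + M) atTop
        (𝓝 (f (H (z, a, y)) + M)) := by
      refine (((f.continuous.tendsto _).comp ?_).add_const M)
      simpa [Function.comp] using h1
    exact (ENNReal.continuous_ofReal.tendsto _).comp h2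
  -- The part on Y₁ (weak convergence)
  have hTlim : Tendsto (fun k => ∫⁻ y in Y₁, Gm k y ∂(Rm k)) atTop
      (𝓝 (∫⁻ y in Y₁, Ginf y ∂(Rinf))) := by
    have hbound : ∀ (m' : Measure Y) [IsFiniteMeasure m'] (gg : Y → ℝ≥0∞), (∀ y, gg y ≤ K) →
        ∫⁻ y in Y₁, gg y ∂m' ≤ K * m' Y₁ := by
      intro m' _ gg hgg
      calc ∫⁻ y in Y₁, gg y ∂m' ≤ ∫⁻ _ in Y₁, K ∂m' := lintegral_mono fun y => hgg y
        _ = K * m' Y₁ := by rw [setLIntegral_const]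
    have hsubid : ∀ (m' : Measure Y) [IsFiniteMeasure m'] (gg : Y → ℝ≥0∞), Measurable gg →
        (∀ y, gg y ≤ K) →
        ∫⁻ y, Y₁.indicator (fun y' => K - gg y') y ∂m'
          = K * m' Y₁ - ∫⁻ y in Y₁, gg y ∂m' := by
      intro m' _ gg hmgg hgg
      rw [lintegral_indicator hY₁meas,
        lintegral_sub hmgg (ne_of_lt (lt_of_le_of_lt (hbound m' gg hgg)
          (ENNReal.mul_lt_top hKtop.lt_top (measure_lt_top m' Y₁))))
        (Eventually.of_forall fun y => hgg y), setLIntegral_const]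
    refine aux_squeeze (c := fun k => K * Rm k Y₁)
      (ENNReal.mul_ne_top hKtop (measure_ne_top Rinf Y₁))
      (fun k => hbound (Rm k) (Gm k) (fun y => hGbd _))
      (hbound Rinf Ginf (fun y => hGbd _))
      (ENNReal.Tendsto.const_mul hY₁mass (Or.inr hKtop)) ?_ ?_
    · -- liminf lower bound
      have hfw := aux_fatou_weak hweak (Y₁.indicator Ginf) (fun k => Y₁.indicator (Gm k))
        hKtop (fun k y => le_trans (Set.indicator_le_self _ _ y) (hGbd _)) ?_
      · have hfw2 := hfw; simp only [lintegral_indicator hY₁meas] at hfw2; exact hfw2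
      · intro y ys hys
        by_cases hy : y ∈ Y₁
        · rw [Set.indicator_of_mem hy]
          have hev : ∀ᶠ k in atTop, ys k ∈ Y₁ := hys.eventually (hY₁open.eventually_mem hy)
          have htd : Tendsto (fun k => Y₁.indicator (Gm k) (ys k)) atTop (𝓝 (Ginf y)) := by
            refine Tendsto.congr' ?_ (hccY₁ y hy ys hys)
            filter_upwards [hev] with k hk
            exact (Set.indicator_of_mem hk _).symm
          exact htd.liminf_eq.symm.le
        · rw [Set.indicator_of_notMem hy]; exact zero_le
    · -- liminf upper (complement) bound
      have hfw := aux_fatou_weak hweak (Y₁.indicator fun y => K - Ginf y)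
        (fun k => Y₁.indicator fun y => K - Gm k y) hKtop
        (fun k y => le_trans (Set.indicator_le_self _ _ y) tsub_le_self) ?_
      · have heq : ∀ k, ∫⁻ y, Y₁.indicator (fun y' => K - Gm k y') y ∂(Rm k)
            = K * Rm k Y₁ - ∫⁻ y in Y₁, Gm k y ∂(Rm k) :=
          fun k => hsubid (Rm k) (Gm k) (hGmmeas k) (fun y => hGbd _)
        have heqInf : ∫⁻ y, Y₁.indicator (fun y' => K - Ginf y') y ∂(Rinf)
            = K * Rinf Y₁ - ∫⁻ y in Y₁, Ginf y ∂(Rinf) :=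
          hsubid Rinf Ginf hGinfmeas (fun y => hGbd _)
        have hfw' : ∫⁻ y, Y₁.indicator (fun y' => K - Ginf y') y ∂(Rinf)
            ≤ atTop.liminf fun k =>
              ∫⁻ y, Y₁.indicator (fun y' => K - Gm k y') y ∂(Rm k) := hfw
        rw [heqInf] at hfw'
        refine le_trans hfw' (le_of_eq (Filter.liminf_congr ?_))
        refine Eventually.of_forall fun k => ?_
        beta_reduce
        exact heq k
      · intro y ys hys
        by_cases hy : y ∈ Y₁
        · rw [Set.indicator_of_mem hy]
          have hev : ∀ᶠ k in atTop, ys k ∈ Y₁ := hys.eventually (hY₁open.eventually_mem hy)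
          have htd : Tendsto (fun k => Y₁.indicator (fun y' => K - Gm k y') (ys k)) atTop
              (𝓝 (K - Ginf y)) := by
            refine Tendsto.congr' ?_
              (ENNReal.Tendsto.sub tendsto_const_nhds (hccY₁ y hy ys hys) (Or.inl hKtop))
            filter_upwards [hev] with k hk
            exact (Set.indicator_of_mem hk (fun y' => K - Gm k y')).symm
          exact htd.liminf_eq.symm.le
        · rw [Set.indicator_of_notMem hy]; exact zero_le
  -- The part on Y₂ (setwise convergence)
  have hSlim : Tendsto (fun k => ∫⁻ y in Y₂, Gm k y ∂(Rm k)) atTop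
      (𝓝 (∫⁻ y in Y₂, Ginf y ∂(Rinf))) := by
    have hsetE : ∀ E : Set Y, MeasurableSet E →
        Tendsto (fun k => (Rm k).restrict Y₂ E) atTop (𝓝 (Rinf.restrict Y₂ E)) := by
      intro E hE
      simp only [Measure.restrict_apply hE]
      exact hsetw (E ∩ Y₂) Set.inter_subset_right (hE.inter hY₂meas)
    have haec : ∀ᵐ y ∂(Rinf.restrict Y₂), y ∈ C := by
      rw [ae_iff]
      have hCc : {y | ¬ y ∈ C} = Cᶜ := rfl
      rw [hCc, Measure.restrict_apply hCmeas.compl]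
      have : Cᶜ ∩ Y₂ = Y₂ \ C := by rw [Set.diff_eq, Set.inter_comm]
      rw [this]
      exact hC0
    have hbound : ∀ (k : ℕ), ∫⁻ y, Gm k y ∂((Rm k).restrict Y₂) ≤ K * (Rm k).restrict Y₂ Set.univ := by
      intro k
      calc ∫⁻ y, Gm k y ∂((Rm k).restrict Y₂) ≤ ∫⁻ _, K ∂((Rm k).restrict Y₂) :=
            lintegral_mono fun y => hGbd _
        _ = K * (Rm k).restrict Y₂ Set.univ := by rw [lintegral_const]
    have hboundinf : ∫⁻ y, Ginf y ∂(Rinf.restrict Y₂) ≤ K * Rinf.restrict Y₂ Set.univ := by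
      calc ∫⁻ y, Ginf y ∂(Rinf.restrict Y₂) ≤ ∫⁻ _, K ∂(Rinf.restrict Y₂) :=
            lintegral_mono fun y => hGbd _
        _ = K * Rinf.restrict Y₂ Set.univ := by rw [lintegral_const]
    have hliminf_aux : ∀ (gs : ℕ → Y → ℝ≥0∞) (g : Y → ℝ≥0∞), (∀ k, Measurable (gs k)) →
        (∀ᵐ y ∂(Rinf.restrict Y₂), Tendsto (fun k => gs k y) atTop (𝓝 (g y))) →
        ∫⁻ y, g y ∂(Rinf.restrict Y₂)
          ≤ atTop.liminf fun k => ∫⁻ y, gs k y ∂((Rm k).restrict Y₂) := by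
      intro gs g hgsm hgscv
      set w : ℕ → Y → ℝ≥0∞ := fun N y => ⨅ (k : ℕ) (_ : N ≤ k), gs k y with hwdef
      have hwmeas : ∀ N, Measurable (w N) :=
        fun N => Measurable.iInf fun k => Measurable.iInf fun _ => hgsm k
      have hwmono : Monotone w := by
        intro N N' hNN' y
        exact le_iInf₂ fun k hk => iInf₂_le k (hNN'.trans hk)
      have hchain : ∀ N, ∫⁻ y, w N y ∂(Rinf.restrict Y₂)
          ≤ atTop.liminf fun k => ∫⁻ y, gs k y ∂((Rm k).restrict Y₂) := by
        intro N
        refine le_trans (aux_setwise_fatou hsetE (hwmeas N)) ?_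
        refine Filter.liminf_le_liminf ?_
        filter_upwards [eventually_ge_atTop N] with k hk
        exact lintegral_mono fun y => iInf₂_le k hk
      calc ∫⁻ y, g y ∂(Rinf.restrict Y₂) ≤ ∫⁻ y, ⨆ N, w N y ∂(Rinf.restrict Y₂) := by
            refine lintegral_mono_ae ?_
            filter_upwards [hgscv] with y hy
            have : atTop.liminf (fun k => gs k y) = g y := hy.liminf_eq
            rw [← this, Filter.liminf_eq_iSup_iInf_of_nat]
        _ = ⨆ N, ∫⁻ y, w N y ∂(Rinf.restrict Y₂) := lintegral_iSup hwmeas hwmono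
        _ ≤ atTop.liminf fun k => ∫⁻ y, gs k y ∂((Rm k).restrict Y₂) := iSup_le hchain
    refine aux_squeeze (c := fun k => K * (Rm k).restrict Y₂ Set.univ)
      (ENNReal.mul_ne_top hKtop (measure_ne_top _ _)) hbound hboundinf
      (ENNReal.Tendsto.const_mul (hsetE Set.univ MeasurableSet.univ) (Or.inr hKtop)) ?_ ?_
    · refine hliminf_aux Gm Ginf hGmmeas ?_
      filter_upwards [haec] with y hy
      exact hGcv y hy
    · have hsubid : ∀ (m' : Measure Y) (gg : Y → ℝ≥0∞), Measurable gg → (∀ y, gg y ≤ K) →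
          (∫⁻ y, gg y ∂m' ≠ ∞) →
          ∫⁻ y, K - gg y ∂m' = K * m' Set.univ - ∫⁻ y, gg y ∂m' := by
        intro m' gg hmgg hgg hfin
        rw [lintegral_sub hmgg hfin (Eventually.of_forall fun y => hgg y), lintegral_const]
      have hfin : ∀ k, ∫⁻ y, Gm k y ∂((Rm k).restrict Y₂) ≠ ∞ := fun k =>
        ne_of_lt (lt_of_le_of_lt (hbound k)
          (ENNReal.mul_lt_top hKtop.lt_top (measure_lt_top _ _)))
      have hfininf : ∫⁻ y, Ginf y ∂(Rinf.restrict Y₂) ≠ ∞ :=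
        ne_of_lt (lt_of_le_of_lt hboundinf
          (ENNReal.mul_lt_top hKtop.lt_top (measure_lt_top _ _)))
      have h2 := hliminf_aux (fun k y => K - Gm k y) (fun y => K - Ginf y)
        (fun k => (measurable_const.sub (hGmmeas k))) ?_
      · rw [hsubid _ Ginf hGinfmeas (fun y => hGbd _) hfininf] at h2
        refine le_trans h2 (le_of_eq (Filter.liminf_congr (Eventually.of_forall fun k => ?_)))
        beta_reduce
        exact hsubid _ (Gm k) (hGmmeas k) (fun y => hGbd _) (hfin k)
      · filter_upwards [haec] with y hy
        exact ENNReal.Tendsto.sub tendsto_const_nhds (hGcv y hy) (Or.inl hKtop)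
  -- combine
  have hkey : Tendsto (fun k => ∫⁻ y, Gm k y ∂(Rm k)) atTop (𝓝 (∫⁻ y, Ginf y ∂(Rinf))) := by
    have hdec : ∀ (m' : Measure Y) (gg : Y → ℝ≥0∞),
        ∫⁻ y, gg y ∂m' = ∫⁻ y in Y₂, gg y ∂m' + ∫⁻ y in Y₁, gg y ∂m' := by
      intro m' gg
      rw [hY₂c, lintegral_add_compl gg hY₂meas]
    simp only [fun k => hdec (Rm k) (Gm k), hdec Rinf Ginf]
    exact hSlim.add hTlim
  have hfininf : ∫⁻ y, Ginf y ∂(Rinf) ≠ ∞ := by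
    refine ne_of_lt (lt_of_le_of_lt ?_ hKtop.lt_top)
    calc ∫⁻ y, Ginf y ∂(Rinf) ≤ ∫⁻ _, K ∂(Rinf) := lintegral_mono fun y => hGbd _
      _ = K := by simp
  have hreal : Tendsto (fun k => (∫⁻ y, Gm k y ∂(Rm k)).toReal) atTop
      (𝓝 ((∫⁻ y, Ginf y ∂(Rinf)).toReal)) := (ENNReal.tendsto_toReal hfininf).comp hkey
  have hfinal := hreal.sub_const M
  rw [show (∫ ζ, f ζ ∂(qker P Q H z a)) = (∫⁻ y, Ginf y ∂(Rinf)).toReal - M from hid z a]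
  exact Tendsto.congr (fun k => (hid (zs (ms k)) (as (ms k))).symm) hfinal
end

section
/- Let the stochastic kernel P(dx′|x,a) on X given X×A be weakly continuous, let Y be countable (with the discrete topology), and suppose for each y ∈ Y the function (a,x) ↦ Q({y}|a,x) is continuous on A×X. Then for each y ∈ Y the function (z,a) ↦ R′({y}|z,a) = ∫_X ∫_X Q({y}|a,x′) P(dx′|x,a) z(dx) is continuous on P(X)×A, where P(X) carries the topology of weak convergence. -/
open MeasureTheory Filter Topology
open scoped ENNReal NNReal

section helpers
variable {X A : Type*} [MetricSpace X] [MetricSpace A]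

def sliceCore (G : Set (X × A)) (a : A) (δ : ℝ) : Set X :=
  {x | ∀ x' a', dist x' x < δ → dist a' a < δ → (x', a') ∈ G}

lemma isClosed_sliceCore (G : Set (X × A)) (a : A) (δ : ℝ) : IsClosed (sliceCore G a δ) := by
  rw [← isOpen_compl_iff, Metric.isOpen_iff]
  intro x hx
  simp only [sliceCore, Set.mem_compl_iff, Set.mem_setOf_eq, not_forall] at hx
  obtain ⟨x', a', hx', ha', hG⟩ := hx
  refine ⟨δ - dist x' x, sub_pos.mpr hx', ?_⟩
  intro x'' hx''
  rw [Metric.mem_ball] at hx''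
  simp only [sliceCore, Set.mem_compl_iff, Set.mem_setOf_eq, not_forall]
  refine ⟨x', a', ?_, ha', hG⟩
  have := dist_triangle x' x x''
  have := dist_comm x x''
  linarith

lemma sliceCore_mono (G : Set (X × A)) (a : A) {δ δ' : ℝ} (h : δ ≤ δ') :
    sliceCore G a δ' ⊆ sliceCore G a δ :=
  fun _ hx x' a' h1 h2 => hx x' a' (lt_of_lt_of_le h1 h) (lt_of_lt_of_le h2 h)

lemma sliceCore_subset {G : Set (X × A)} {a : A} {δ : ℝ} (hδ : 0 < δ) :
    sliceCore G a δ ⊆ {x | (x, a) ∈ G} := by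
  intro x hx
  exact hx x a (by simpa using hδ) (by simpa using hδ)

lemma subset_iUnion_sliceCore {G : Set (X × A)} (hG : IsOpen G) (a : A) :
    {x | (x, a) ∈ G} ⊆ ⋃ k : ℕ, sliceCore G a (1 / (k + 1)) := by
  intro x hx
  obtain ⟨ε, hε, hball⟩ := Metric.isOpen_iff.mp hG (x, a) hx
  obtain ⟨k, hk⟩ := exists_nat_one_div_lt hε
  refine Set.mem_iUnion.mpr ⟨k, ?_⟩
  intro x' a' h1 h2
  apply hball
  rw [Metric.mem_ball, Prod.dist_eq]
  exact max_lt (lt_trans h1 hk) (lt_trans h2 hk)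

end helpers

lemma aux_tendsto_map {X A : Type*} [MetricSpace X] [SecondCountableTopology X]
    [MeasurableSpace X] [BorelSpace X] [MetricSpace A] [MeasurableSpace A] [BorelSpace A]
    {z : ℕ → ProbabilityMeasure X} {as : ℕ → A} {zl : ProbabilityMeasure X} {al : A}
    (hz : Tendsto z atTop (𝓝 zl)) (ha : Tendsto as atTop (𝓝 al)) :
    Tendsto (fun n => (z n).map (f := fun x => (x, as n)) measurable_prodMk_right.aemeasurable)
      atTop (𝓝 (zl.map (f := fun x => (x, al)) measurable_prodMk_right.aemeasurable)) := by
  apply tendsto_of_forall_isOpen_le_liminf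
  intro G hG
  have hGm : MeasurableSet G := hG.measurableSet
  -- rewrite goal via le_liminf_iff
  have hcob : atTop.IsCoboundedUnder (· ≥ ·)
      (fun n => ((z n).map (f := fun x => (x, as n)) measurable_prodMk_right.aemeasurable) G) :=
    IsBoundedUnder.isCoboundedUnder_ge (isBoundedUnder_of
      ⟨1, fun n => ProbabilityMeasure.apply_le_one _ G⟩)
  have hbdd : atTop.IsBoundedUnder (· ≥ ·)
      (fun n => ((z n).map (f := fun x => (x, as n)) measurable_prodMk_right.aemeasurable) G) :=
    isBoundedUnder_of ⟨0, fun n => zero_le⟩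
  rw [le_liminf_iff hcob hbdd]
  intro y hy
  -- express map applications
  have hmap : ∀ (μ : ProbabilityMeasure X) (b : A),
      ((μ.map (f := fun x => (x, b)) measurable_prodMk_right.aemeasurable) G : ℝ≥0∞)
        = (μ : Measure X) {x | (x, b) ∈ G} := by
    intro μ b
    rw [ProbabilityMeasure.ennreal_coeFn_eq_coeFn_toMeasure, ProbabilityMeasure.toMeasure_map,
      Measure.map_apply measurable_prodMk_right hGm]
    rfl
  have hy' : (y : ℝ≥0∞) < (zl : Measure X) {x | (x, al) ∈ G} := by
    rw [← hmap]
    exact ENNReal.coe_lt_coe.mpr hy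
  -- monotone approximation by closed sets
  have hmono : Monotone fun k : ℕ => sliceCore G al (1 / (k + 1)) := by
    intro k l hkl
    apply sliceCore_mono
    apply one_div_le_one_div_of_le (by positivity)
    exact_mod_cast by omega
  have hsup : (zl : Measure X) {x | (x, al) ∈ G}
      ≤ ⨆ k : ℕ, (zl : Measure X) (sliceCore G al (1 / (k + 1))) := by
    calc (zl : Measure X) {x | (x, al) ∈ G}
        ≤ (zl : Measure X) (⋃ k : ℕ, sliceCore G al (1 / (k + 1))) :=
          measure_mono (subset_iUnion_sliceCore hG al)
      _ = ⨆ k : ℕ, (zl : Measure X) (sliceCore G al (1 / (k + 1))) :=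
          Directed.measure_iUnion (Monotone.directed_le hmono)
  obtain ⟨k, hk⟩ := lt_iSup_iff.mp (lt_of_lt_of_le hy' hsup)
  set δ : ℝ := 1 / (k + 1) with hδdef
  have hδ : 0 < δ := by positivity
  set U : Set X := sliceCore G al δ
  set V : Set X := Metric.thickening (δ / 2) U with hVdef
  have hUV : U ⊆ V := Metric.self_subset_thickening (by linarith) U
  have hVopen : IsOpen V := Metric.isOpen_thickening
  -- V is inside the slice of any a' close to al
  have hVslice : ∀ a' : A, dist a' al < δ / 2 → V ⊆ {x | (x, a') ∈ G} := by
    intro a' ha' x hx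
    obtain ⟨x₀, hx₀U, hx₀⟩ := Metric.mem_thickening_iff.mp hx
    exact hx₀U x a' (by rw [dist_comm] at hx₀ ⊢; linarith) (by linarith)
  -- liminf bound on V
  have hzV : (zl : Measure X) V ≤ atTop.liminf fun n => (z n : Measure X) V :=
    ProbabilityMeasure.le_liminf_measure_open_of_tendsto hz hVopen
  have hyV : (y : ℝ≥0∞) < atTop.liminf fun n => (z n : Measure X) V :=
    lt_of_lt_of_le (lt_of_lt_of_le hk (measure_mono hUV)) hzV
  have hev1 : ∀ᶠ n in atTop, (y : ℝ≥0∞) < (z n : Measure X) V :=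
    eventually_lt_of_lt_liminf hyV
  filter_upwards [hev1, Metric.tendsto_nhds.mp ha (δ / 2) (by linarith)] with n h1 h2
  rw [← ENNReal.coe_lt_coe, hmap]
  exact lt_of_lt_of_le h1 (measure_mono (hVslice (as n) h2))

lemma key_continuous {X A : Type*} [MetricSpace X] [SecondCountableTopology X]
    [MeasurableSpace X] [BorelSpace X] [MetricSpace A] [MeasurableSpace A] [BorelSpace A]
    (f : BoundedContinuousFunction (X × A) ℝ) :
    Continuous fun p : ProbabilityMeasure X × A => ∫ x, f (x, p.2) ∂(p.1 : Measure X) := by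
  apply SeqContinuous.continuous
  intro p pl hp
  have hz : Tendsto (fun n => (p n).1) atTop (𝓝 pl.1) :=
    (continuous_fst.tendsto pl).comp hp
  have ha : Tendsto (fun n => (p n).2) atTop (𝓝 pl.2) :=
    (continuous_snd.tendsto pl).comp hp
  have h := ProbabilityMeasure.tendsto_iff_forall_integral_tendsto.mp (aux_tendsto_map hz ha) f
  have eq1 : ∀ (μ : ProbabilityMeasure X) (b : A),
      ∫ ω, f ω ∂((μ.map (f := fun x => (x, b)) measurable_prodMk_right.aemeasurable :
          ProbabilityMeasure (X × A)) : Measure (X × A))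
        = ∫ x, f (x, b) ∂(μ : Measure X) := by
    intro μ b
    rw [ProbabilityMeasure.toMeasure_map,
      integral_map measurable_prodMk_right.aemeasurable f.continuous.aestronglyMeasurable]
  simp_rw [eq1] at h
  exact h

/-- The kernel `R'({y}|z,a) = ∫_X ∫_X Q({y}|a,x') P(dx'|x,a) z(dx)`. -/
noncomputable def RprimeAt {X Y A : Type*} [MeasurableSpace X] [MeasurableSpace Y]
    (P : X × A → ProbabilityMeasure X) (Q : A × X → ProbabilityMeasure Y)
    (z : ProbabilityMeasure X) (a : A) (y : Y) : ℝ≥0∞ :=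
  ∫⁻ x, (∫⁻ x', ((Q (a, x') : Measure Y) {y}) ∂((P (x, a) : Measure X))) ∂(z : Measure X)

/-- **Lemma (continuity of `R'({y}|z,a)` for countable observation sets).**
If the kernel `P` on `X` given `X×A` is weakly continuous, `Y` is countable (discrete),
and `(a,x) ↦ Q({y}|a,x)` is continuous for each `y ∈ Y`, then for each `y ∈ Y` the
function `(z,a) ↦ R'({y}|z,a)` is continuous on `P(X)×A`, where `P(X)` carries the
topology of weak convergence. -/
theorem RprimeAt_continuous_of_countable {X Y A : Type*}
    [MetricSpace X] [SecondCountableTopology X] [MeasurableSpace X] [BorelSpace X]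
    [MetricSpace A] [MeasurableSpace A] [BorelSpace A]
    [Countable Y] [TopologicalSpace Y] [DiscreteTopology Y]
    [MeasurableSpace Y] [MeasurableSingletonClass Y]
    (P : X × A → ProbabilityMeasure X) (Q : A × X → ProbabilityMeasure Y)
    (hPmeas : Measurable fun p => (P p : Measure X))
    (hPcont : Continuous P)
    (hQy : ∀ y : Y, Continuous fun p : A × X => ((Q p) {y} : ℝ)) :
    ∀ y : Y, Continuous fun p : ProbabilityMeasure X × A =>
      (RprimeAt P Q p.1 p.2 y).toReal := by
  intro y
  set q : A × X → ℝ := fun p => ((Q p) {y} : ℝ) with hqdef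
  have hq : Continuous q := hQy y
  have hq0 : ∀ p, 0 ≤ q p := fun p => NNReal.coe_nonneg _
  have hq1 : ∀ p, q p ≤ 1 := fun p => by
    exact_mod_cast ProbabilityMeasure.apply_le_one (Q p) {y}
  -- inner bounded continuous function
  set f₁ : BoundedContinuousFunction (X × A) ℝ :=
    BoundedContinuousFunction.ofNormedAddCommGroup (fun p => q (p.2, p.1))
      (hq.comp (continuous_snd.prodMk continuous_fst)) 1
      (fun p => by rw [Real.norm_of_nonneg (hq0 _)]; exact hq1 _) with hf₁def
  -- inner integral
  set F : X × A → ℝ := fun p => ∫ x', f₁ (x', p.2) ∂(P p : Measure X) with hFdef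
  have hFcont : Continuous F := by
    have := (key_continuous f₁).comp (hPcont.prodMk continuous_snd :
      Continuous fun p : X × A => (P p, p.2))
    exact this
  have hF0 : ∀ p, 0 ≤ F p := fun p => integral_nonneg fun x' => hq0 _
  have hFnorm : ∀ p, ‖F p‖ ≤ 1 := by
    intro p
    have := norm_integral_le_of_norm_le_const (μ := (P p : Measure X))
      (f := fun x' => f₁ (x', p.2)) (C := 1)
      (Eventually.of_forall fun x' => by show ‖q (p.2, x')‖ ≤ 1; rw [Real.norm_of_nonneg (hq0 _)]; exact hq1 _)
    simpa using this
  set F₂ : BoundedContinuousFunction (X × A) ℝ :=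
    BoundedContinuousFunction.ofNormedAddCommGroup F hFcont 1 hFnorm with hF₂def
  -- the pointwise identification
  have hQm : ∀ (a : A) (x' : X), (Q (a, x') : Measure Y) {y} = ENNReal.ofReal (q (a, x')) := by
    intro a x'
    rw [← ProbabilityMeasure.ennreal_coeFn_eq_coeFn_toMeasure, hqdef,
      ENNReal.ofReal_coe_nnreal]
  have claim1 : ∀ (x : X) (a : A),
      (∫⁻ x', ((Q (a, x') : Measure Y) {y}) ∂((P (x, a) : Measure X)))
        = ENNReal.ofReal (F (x, a)) := by
    intro x a
    have hmeas : AEStronglyMeasurable (fun x' => q (a, x')) (P (x, a) : Measure X) :=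
      (hq.comp (continuous_const.prodMk continuous_id)).aestronglyMeasurable
    have hfin : (∫⁻ x', ((Q (a, x') : Measure Y) {y}) ∂((P (x, a) : Measure X))) ≤ 1 := by
      calc ∫⁻ x', ((Q (a, x') : Measure Y) {y}) ∂((P (x, a) : Measure X))
          ≤ ∫⁻ _, 1 ∂((P (x, a) : Measure X)) := lintegral_mono fun x' => prob_le_one
        _ = 1 := by simp
    have hF : F (x, a) = (∫⁻ x', ((Q (a, x') : Measure Y) {y})
        ∂((P (x, a) : Measure X))).toReal := by
      have := integral_eq_lintegral_of_nonneg_ae (μ := (P (x, a) : Measure X))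
        (f := fun x' => q (a, x')) (Eventually.of_forall fun x' => hq0 _) hmeas
      simp_rw [hQm]
      exact this
    rw [hF, ENNReal.ofReal_toReal (lt_of_le_of_lt hfin ENNReal.one_lt_top).ne]
  have key : ∀ (z : ProbabilityMeasure X) (a : A),
      (RprimeAt P Q z a y).toReal = ∫ x, F (x, a) ∂(z : Measure X) := by
    intro z a
    have hmeas : AEStronglyMeasurable (fun x => F (x, a)) (z : Measure X) :=
      (hFcont.comp (continuous_id.prodMk continuous_const)).aestronglyMeasurable
    rw [RprimeAt]
    simp_rw [claim1]
    rw [integral_eq_lintegral_of_nonneg_ae (Eventually.of_forall fun x => hF0 _) hmeas]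
  have : (fun p : ProbabilityMeasure X × A => (RprimeAt P Q p.1 p.2 y).toReal)
      = fun p => ∫ x, F₂ (x, p.2) ∂(p.1 : Measure X) := funext fun p => key p.1 p.2
  rw [this]
  exact key_continuous F₂
end

section
/- Let Y and W be Borel subsets of Polish spaces, let X = Y×W, let A be a Borel subset of a Polish space, and let P(dx′|x,a) be a stochastic kernel on X given X×A. Suppose that for each nonempty open set O in W, the family of functions { (x,a) ↦ P(C×O|x,a) : C Borel in Y } is equicontinuous at every point (x,a) ∈ X×A. Then the stochastic kernel R′ on Y given P(X)×A defined by R′(C|z,a) = ∫_X P(C×W|x,a) z(dx) is continuous in total variation: whenever z⁽ⁿ⁾ → z weakly in P(X) and a⁽ⁿ⁾ → a in A, sup_{C Borel in Y} |R′(C|z⁽ⁿ⁾,a⁽ⁿ⁾) − R′(C|z,a)| → 0. -/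
open MeasureTheory Filter Topology
open scoped ENNReal NNReal

open Metric Set

private lemma frontier_biUnion_subset' {X : Type*} [TopologicalSpace X] (B : ℕ → Set X) (K : ℕ) :
    frontier (⋃ k ∈ Finset.range K, B k) ⊆ ⋃ k ∈ Finset.range K, frontier (B k) := by
  induction K with
  | zero => simp
  | succ K ih =>
    rw [Finset.range_add_one, Finset.set_biUnion_insert, Finset.set_biUnion_insert]
    refine (frontier_union_subset _ _).trans ?_
    refine (Set.union_subset_union Set.inter_subset_left Set.inter_subset_right).trans ?_
    exact Set.union_subset_union subset_rfl ih

private lemma mdmii_aux {X A : Type*}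
    [MetricSpace X] [SecondCountableTopology X] [MeasurableSpace X] [BorelSpace X]
    [MetricSpace A]
    {I : Type*} [Nonempty I] (g : I → X × A → ℝ)
    (hmeas : ∀ (i : I) (c : A), Measurable fun x => g i (x, c))
    (hg0 : ∀ i p, 0 ≤ g i p) (hg1 : ∀ i p, g i p ≤ 1)
    (hE : ∀ p₀ : X × A, Tendsto (fun p => ⨆ i, |g i p - g i p₀|) (𝓝 p₀) (𝓝 0))
    (zs : ℕ → ProbabilityMeasure X) (z : ProbabilityMeasure X)
    (as : ℕ → A) (a : A)
    (hz : Tendsto zs atTop (𝓝 z)) (ha : Tendsto as atTop (𝓝 a)) :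
    Tendsto (fun n => ⨆ i, |(∫ x, g i (x, as n) ∂(zs n : Measure X)) -
        ∫ x, g i (x, a) ∂(z : Measure X)|) atTop (𝓝 0) := by
  classical
  have hXne : Nonempty X := z.nonempty
  -- integrability
  have hintg : ∀ (i : I) (c : A) (μ : Measure X) [IsProbabilityMeasure μ],
      Integrable (fun x => g i (x, c)) μ := by
    intro i c μ _
    refine Integrable.mono' (integrable_const 1) (hmeas i c).aestronglyMeasurable ?_
    refine Filter.Eventually.of_forall fun x => ?_
    rw [Real.norm_eq_abs, abs_of_nonneg (hg0 i _)]
    exact hg1 i _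
  -- each integral difference is bounded by 2
  have hbd2 : ∀ (n : ℕ) (i : I),
      |(∫ x, g i (x, as n) ∂(zs n : Measure X)) - ∫ x, g i (x, a) ∂(z : Measure X)| ≤ 2 := by
    intro n i
    have h1 : ∀ (c : A) (μ : Measure X) [IsProbabilityMeasure μ],
        |∫ x, g i (x, c) ∂μ| ≤ 1 := by
      intro c μ _
      rw [← Real.norm_eq_abs]
      calc ‖∫ x, g i (x, c) ∂μ‖ ≤ 1 * (μ Set.univ).toReal :=
            norm_integral_le_of_norm_le_const (Filter.Eventually.of_forall fun x => by
              rw [Real.norm_eq_abs, abs_of_nonneg (hg0 i _)]; exact hg1 i _)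
        _ = 1 := by simp
    calc |(∫ x, g i (x, as n) ∂(zs n : Measure X)) - ∫ x, g i (x, a) ∂(z : Measure X)|
        ≤ |∫ x, g i (x, as n) ∂(zs n : Measure X)| + |∫ x, g i (x, a) ∂(z : Measure X)| :=
          abs_sub _ _
      _ ≤ 1 + 1 := add_le_add (h1 _ _) (h1 _ _)
      _ = 2 := by norm_num
  rw [NormedAddCommGroup.tendsto_nhds_zero]
  intro ε hε
  set ε' : ℝ := ε / 6 with hε'def
  have hε' : 0 < ε' := by positivity
  -- Step A: radii around each point
  have key : ∀ x : X, ∃ r : ℝ, 0 < r ∧ (z : Measure X) (frontier (ball x r)) = 0 ∧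
      ∀ p : X × A, dist p (x, a) < r → ∀ i, |g i p - g i (x, a)| ≤ ε' := by
    intro x
    have h1 : ∀ᶠ p in 𝓝 (x, a), (⨆ i, |g i p - g i (x, a)|) < ε' :=
      (hE (x, a)).eventually (eventually_lt_nhds hε')
    rw [Metric.eventually_nhds_iff] at h1
    obtain ⟨δ₀, hδ₀, hδ₀p⟩ := h1
    obtain ⟨r, hr, hrnull⟩ :=
      exists_null_frontier_thickening (z : Measure X) {x} (show (0:ℝ) < δ₀ from hδ₀)
    rw [Metric.thickening_singleton] at hrnull
    refine ⟨r, hr.1, hrnull, fun p hp i => ?_⟩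
    have hsup := hδ₀p (lt_trans hp hr.2)
    have hle : |g i p - g i (x, a)| ≤ ⨆ i, |g i p - g i (x, a)| := by
      refine le_ciSup (f := fun j => |g j p - g j (x, a)|) ⟨2, ?_⟩ i
      rintro t ⟨j, rfl⟩
      calc |g j p - g j (x, a)| ≤ |g j p| + |g j (x, a)| := abs_sub _ _
        _ ≤ 1 + 1 := add_le_add
            (by rw [abs_of_nonneg (hg0 j _)]; exact hg1 j _)
            (by rw [abs_of_nonneg (hg0 j _)]; exact hg1 j _)
        _ = 2 := by norm_num
    exact hle.trans hsup.le
  choose δ hδpos hδnull hδeps using key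
  -- Step B: countable subcover
  obtain ⟨T, Tcount, hT⟩ :=
    TopologicalSpace.isOpen_iUnion_countable (fun x => ball x (δ x)) fun x => isOpen_ball
  have hTunion : ⋃ x ∈ T, ball x (δ x) = Set.univ := by
    rw [hT]
    exact Set.eq_univ_of_forall fun x => Set.mem_iUnion.2 ⟨x, mem_ball_self (hδpos x)⟩
  have hTne : T.Nonempty := by
    rcases hXne with ⟨x0⟩
    have hx : x0 ∈ ⋃ x ∈ T, ball x (δ x) := hTunion.symm ▸ Set.mem_univ x0
    obtain ⟨x, hxT, -⟩ := Set.mem_iUnion₂.1 hx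
    exact ⟨x, hxT⟩
  obtain ⟨f, hfT⟩ := Tcount.exists_eq_range hTne
  set B : ℕ → Set X := fun k => ball (f k) (δ (f k)) with hBdef
  have hBopen : ∀ k, IsOpen (B k) := fun k => isOpen_ball
  have hBunion : ⋃ k, B k = Set.univ := by
    rw [← hTunion, hfT, Set.biUnion_range]
  set U : ℕ → Set X := fun K => ⋃ k ∈ Finset.range K, B k with hUdef
  have hUmono : Monotone U := by
    intro m n hmn
    exact Set.biUnion_subset_biUnion_left (Finset.range_subset_range.2 hmn)
  have hUunion : ⋃ K, U K = Set.univ := by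
    rw [← hBunion]
    ext x
    simp only [Set.mem_iUnion, hUdef, Finset.mem_range]
    constructor
    · rintro ⟨K, k, hk, hx⟩; exact ⟨k, hx⟩
    · rintro ⟨k, hx⟩; exact ⟨k + 1, k, Nat.lt_succ_self k, hx⟩
  -- choose K
  have hUmeas : ∀ K, MeasurableSet (U K) := by
    intro K
    exact (isOpen_biUnion fun k _ => hBopen k).measurableSet
  have hcompl : Tendsto (fun K => (z : Measure X) ((U K)ᶜ)) atTop (𝓝 0) := by
    have h := tendsto_measure_iInter_atTop (μ := (z : Measure X))
      (s := fun K => (U K)ᶜ)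
      (fun K => ((hUmeas K).compl).nullMeasurableSet)
      (fun m n hmn => Set.compl_subset_compl.2 (hUmono hmn))
      ⟨0, measure_ne_top _ _⟩
    have : ⋂ K, (U K)ᶜ = ∅ := by
      rw [← Set.compl_iUnion, hUunion, Set.compl_univ]
    rw [this] at h
    simpa [Function.comp_def] using h
  obtain ⟨K, hK⟩ : ∃ K, (z : Measure X) ((U K)ᶜ) < ENNReal.ofReal ε' := by
    have := hcompl.eventually (eventually_lt_nhds (show (0:ℝ≥0∞) < ENNReal.ofReal ε' by
      exact ENNReal.ofReal_pos.2 hε'))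
    exact this.exists
  -- disjointified pieces
  set E : ℕ → Set X := fun k => B k \ ⋃ j ∈ Finset.range k, B j with hEdef
  have hEmeas : ∀ k, MeasurableSet (E k) :=
    fun k => (hBopen k).measurableSet.diff (isOpen_biUnion fun j _ => hBopen j).measurableSet
  have hEsubB : ∀ k, E k ⊆ B k := fun k => Set.diff_subset
  have hEdisj : Set.PairwiseDisjoint (↑(Finset.range K) : Set ℕ) E := by
    intro j hj k hk hjk
    rcases hjk.lt_or_gt with h | h
    · exact Set.disjoint_right.2 fun x hxk hxj =>
        hxk.2 (Set.mem_biUnion (Finset.mem_range.2 h) (hEsubB j hxj))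
    · exact Set.disjoint_left.2 fun x hxj hxk =>
        hxj.2 (Set.mem_biUnion (Finset.mem_range.2 h) (hEsubB k hxk))
  have hEU : ⋃ k ∈ Finset.range K, E k = U K := by
    apply Set.Subset.antisymm
    · exact Set.iUnion₂_mono fun k _ => hEsubB k
    · intro x hx
      simp only [hUdef, Set.mem_iUnion, Finset.mem_range] at hx
      obtain ⟨k, hkK, hxk⟩ := hx
      have hex : ∃ j, x ∈ B j := ⟨k, hxk⟩
      have hm := Nat.find_spec hex
      have hmin : ∀ j < Nat.find hex, x ∉ B j := fun j hj => Nat.find_min hex hj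
      have hmem : x ∈ E (Nat.find hex) := ⟨hm, by
        intro hxU
        simp only [Set.mem_iUnion, Finset.mem_range] at hxU
        obtain ⟨j, hj, hxj⟩ := hxU
        exact hmin j hj hxj⟩
      exact Set.mem_biUnion
        (Finset.mem_range.2 (lt_of_le_of_lt (Nat.find_min' hex hxk) hkK)) hmem
  -- null frontiers
  have hfrB : ∀ k, (z : Measure X) (frontier (B k)) = 0 := fun k => hδnull (f k)
  have hfrUnull : ∀ m, (z : Measure X) (frontier (⋃ j ∈ Finset.range m, B j)) = 0 := by
    intro m
    refine measure_mono_null (frontier_biUnion_subset' B m) ?_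
    exact (measure_biUnion_null_iff (Finset.range m).countable_toSet).2 fun j _ => hfrB j
  have hfrE : ∀ k, (z : Measure X) (frontier (E k)) = 0 := by
    intro k
    have hsub : frontier (E k) ⊆ frontier (B k) ∪ frontier (⋃ j ∈ Finset.range k, B j) := by
      have : E k = B k ∩ (⋃ j ∈ Finset.range k, B j)ᶜ := rfl
      rw [this]
      refine (frontier_inter_subset _ _).trans ?_
      refine (Set.union_subset_union Set.inter_subset_left Set.inter_subset_right).trans ?_
      rw [frontier_compl]
    refine measure_mono_null hsub ?_
    exact measure_union_null (hfrB k) (hfrUnull k)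
  have hfrUc : (z : Measure X) (frontier ((U K)ᶜ)) = 0 := by
    rw [frontier_compl]; exact hfrUnull K
  -- portmanteau convergences
  have hconvE : ∀ k, Tendsto (fun n => ((zs n : Measure X) (E k)).toReal) atTop
      (𝓝 (((z : Measure X) (E k)).toReal)) := by
    intro k
    have := ProbabilityMeasure.tendsto_measure_of_null_frontier_of_tendsto' hz (hfrE k)
    exact (ENNReal.tendsto_toReal (measure_ne_top _ _)).comp this
  have hconvUc : Tendsto (fun n => ((zs n : Measure X) ((U K)ᶜ)).toReal) atTop
      (𝓝 (((z : Measure X) ((U K)ᶜ)).toReal)) := by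
    have := ProbabilityMeasure.tendsto_measure_of_null_frontier_of_tendsto' hz hfrUc
    exact (ENNReal.tendsto_toReal (measure_ne_top _ _)).comp this
  -- eventual facts
  have hev1 : ∀ᶠ n in atTop, ∑ k ∈ Finset.range K,
      |((zs n : Measure X) (E k)).toReal - ((z : Measure X) (E k)).toReal| < ε' := by
    have hsum : Tendsto (fun n => ∑ k ∈ Finset.range K,
        |((zs n : Measure X) (E k)).toReal - ((z : Measure X) (E k)).toReal|) atTop (𝓝 0) := by
      have : Tendsto (fun n => ∑ k ∈ Finset.range K,
          |((zs n : Measure X) (E k)).toReal - ((z : Measure X) (E k)).toReal|) atTop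
          (𝓝 (∑ k ∈ Finset.range K, (0:ℝ))) := by
        refine tendsto_finset_sum _ fun k _ => ?_
        have := ((hconvE k).sub_const (((z : Measure X) (E k)).toReal)).abs
        simpa using this
      simpa using this
    exact hsum.eventually (eventually_lt_nhds hε')
  have hzUc : (((z : Measure X) ((U K)ᶜ)).toReal) < ε' := by
    have h1 : ((z : Measure X) ((U K)ᶜ)).toReal < (ENNReal.ofReal ε').toReal :=
      ENNReal.toReal_strict_mono ENNReal.ofReal_ne_top hK
    rwa [ENNReal.toReal_ofReal hε'.le] at h1
  have hev2 : ∀ᶠ n in atTop, ((zs n : Measure X) ((U K)ᶜ)).toReal < ε' :=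
    hconvUc.eventually (eventually_lt_nhds hzUc)
  have hev3 : ∀ᶠ n in atTop, ∀ k ∈ Finset.range K, dist (as n) a < δ (f k) := by
    rw [eventually_all_finset]
    intro k _
    exact ha (Metric.ball_mem_nhds a (hδpos (f k)))
  filter_upwards [hev1, hev2, hev3] with n h1 h2 h3
  -- the per-n bound
  have hmain : ∀ i : I,
      |(∫ x, g i (x, as n) ∂(zs n : Measure X)) - ∫ x, g i (x, a) ∂(z : Measure X)| ≤ 5 * ε' := by
    intro i
    set μn : Measure X := (zs n : Measure X)
    set μ : Measure X := (z : Measure X)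
    have hμn : IsProbabilityMeasure μn := (zs n).2
    have hμ : IsProbabilityMeasure μ := z.2
    -- split integrals
    have hsplit : ∀ (c : A) (ν : Measure X) (hν : IsProbabilityMeasure ν),
        ∫ x, g i (x, c) ∂ν = (∑ k ∈ Finset.range K, ∫ x in E k, g i (x, c) ∂ν) +
          ∫ x in (U K)ᶜ, g i (x, c) ∂ν := by
      intro c ν hν
      have hint : Integrable (fun x => g i (x, c)) ν := hintg i c ν
      rw [← integral_add_compl (hUmeas K) hint, ← hEU,
        integral_biUnion_finset (Finset.range K) (fun k _ => hEmeas k) hEdisj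
          (fun k _ => hint.integrableOn)]
    -- bound set integral differences
    have hbound : ∀ k ∈ Finset.range K,
        |(∫ x in E k, g i (x, as n) ∂μn) - ∫ x in E k, g i (x, a) ∂μ| ≤
          ε' * (μn (E k)).toReal + |(μn (E k)).toReal - (μ (E k)).toReal| + ε' * (μ (E k)).toReal := by
      intro k hk
      set c : ℝ := g i (f k, a)
      have hc0 : 0 ≤ c := hg0 i _
      have hc1 : c ≤ 1 := hg1 i _
      have hclose : ∀ (x : X) (c' : A), x ∈ E k → dist c' a < δ (f k) →
          |g i (x, c') - c| ≤ ε' := by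
        intro x c' hx hc'
        refine hδeps (f k) (x, c') ?_ i
        rw [Prod.dist_eq]
        exact max_lt (mem_ball.1 (hEsubB k hx)) hc'
      have hEk_ne_top : ∀ (ν : Measure X) [IsProbabilityMeasure ν], ν (E k) < ∞ :=
        fun ν _ => measure_lt_top ν _
      have h₁ : |(∫ x in E k, g i (x, as n) ∂μn) - c * (μn (E k)).toReal| ≤
          ε' * (μn (E k)).toReal := by
        have : (∫ x in E k, g i (x, as n) ∂μn) - c * (μn (E k)).toReal =
            ∫ x in E k, (g i (x, as n) - c) ∂μn := by
          rw [integral_sub ((hintg i (as n) μn).integrableOn) (integrableOn_const (hEk_ne_top μn).ne)]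
          rw [setIntegral_const]
          ring_nf
          simp [smul_eq_mul, mul_comm, Measure.real]
        rw [this, ← Real.norm_eq_abs]
        exact norm_setIntegral_le_of_norm_le_const (hEk_ne_top μn)
          (fun x hx => by rw [Real.norm_eq_abs]; exact hclose x (as n) hx (h3 k hk))
      have h₂ : |(∫ x in E k, g i (x, a) ∂μ) - c * (μ (E k)).toReal| ≤
          ε' * (μ (E k)).toReal := by
        have : (∫ x in E k, g i (x, a) ∂μ) - c * (μ (E k)).toReal =
            ∫ x in E k, (g i (x, a) - c) ∂μ := by
          rw [integral_sub ((hintg i a μ).integrableOn) (integrableOn_const (hEk_ne_top μ).ne)]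
          rw [setIntegral_const]
          ring_nf
          simp [smul_eq_mul, mul_comm, Measure.real]
        rw [this, ← Real.norm_eq_abs]
        exact norm_setIntegral_le_of_norm_le_const (hEk_ne_top μ)
          (fun x hx => by rw [Real.norm_eq_abs]; exact hclose x a hx (by
            rw [dist_self]; exact hδpos (f k)))
      have h₃ : |c * (μn (E k)).toReal - c * (μ (E k)).toReal| ≤
          |(μn (E k)).toReal - (μ (E k)).toReal| := by
        rw [← mul_sub, abs_mul, abs_of_nonneg hc0]
        exact mul_le_of_le_one_left (abs_nonneg _) hc1
      calc |(∫ x in E k, g i (x, as n) ∂μn) - ∫ x in E k, g i (x, a) ∂μ|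
          ≤ |(∫ x in E k, g i (x, as n) ∂μn) - c * (μn (E k)).toReal| +
            |c * (μn (E k)).toReal - c * (μ (E k)).toReal| +
            |c * (μ (E k)).toReal - ∫ x in E k, g i (x, a) ∂μ| := by
            have := abs_sub_le ((∫ x in E k, g i (x, as n) ∂μn)) (c * (μn (E k)).toReal)
              (∫ x in E k, g i (x, a) ∂μ)
            have h4 := abs_sub_le (c * (μn (E k)).toReal) (c * (μ (E k)).toReal)
              (∫ x in E k, g i (x, a) ∂μ)
            linarith
        _ ≤ ε' * (μn (E k)).toReal + |(μn (E k)).toReal - (μ (E k)).toReal| +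
            ε' * (μ (E k)).toReal := by
            rw [abs_sub_comm (c * (μ (E k)).toReal)]
            exact add_le_add (add_le_add h₁ h₃) h₂
    -- sum of measures bound
    have hsumm : ∀ (ν : Measure X) [IsProbabilityMeasure ν],
        ∑ k ∈ Finset.range K, (ν (E k)).toReal ≤ 1 := by
      intro ν _
      have : ∑ k ∈ Finset.range K, (ν (E k)).toReal = (ν (U K)).toReal := by
        rw [← hEU, measure_biUnion_finset hEdisj (fun k _ => hEmeas k),
          ENNReal.toReal_sum (fun k _ => measure_ne_top ν _)]
      rw [this]
      exact ENNReal.toReal_le_of_le_ofReal one_pos.le (by simpa using prob_le_one)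
    -- tail bound
    have htail : ∀ (c : A) (ν : Measure X) (hν : IsProbabilityMeasure ν),
        |∫ x in (U K)ᶜ, g i (x, c) ∂ν| ≤ (ν ((U K)ᶜ)).toReal := by
      intro c ν hν
      rw [← Real.norm_eq_abs]
      calc ‖∫ x in (U K)ᶜ, g i (x, c) ∂ν‖ ≤ 1 * (ν ((U K)ᶜ)).toReal :=
          norm_setIntegral_le_of_norm_le_const (measure_lt_top ν _)
            (fun x _ => by rw [Real.norm_eq_abs, abs_of_nonneg (hg0 i _)]; exact hg1 i _)
        _ = (ν ((U K)ᶜ)).toReal := one_mul _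
    -- combine
    rw [hsplit (as n) μn hμn, hsplit a μ hμ]
    have hstep : |((∑ k ∈ Finset.range K, ∫ x in E k, g i (x, as n) ∂μn) +
          ∫ x in (U K)ᶜ, g i (x, as n) ∂μn) -
        ((∑ k ∈ Finset.range K, ∫ x in E k, g i (x, a) ∂μ) +
          ∫ x in (U K)ᶜ, g i (x, a) ∂μ)| ≤
        (∑ k ∈ Finset.range K, |(∫ x in E k, g i (x, as n) ∂μn) - ∫ x in E k, g i (x, a) ∂μ|) +
        |∫ x in (U K)ᶜ, g i (x, as n) ∂μn| + |∫ x in (U K)ᶜ, g i (x, a) ∂μ| := by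
      have habs : |((∑ k ∈ Finset.range K, ∫ x in E k, g i (x, as n) ∂μn) -
          (∑ k ∈ Finset.range K, ∫ x in E k, g i (x, a) ∂μ))| ≤
          ∑ k ∈ Finset.range K, |(∫ x in E k, g i (x, as n) ∂μn) - ∫ x in E k, g i (x, a) ∂μ| := by
        rw [← Finset.sum_sub_distrib]
        exact Finset.abs_sum_le_sum_abs _ _
      calc |((∑ k ∈ Finset.range K, ∫ x in E k, g i (x, as n) ∂μn) +
            ∫ x in (U K)ᶜ, g i (x, as n) ∂μn) -
          ((∑ k ∈ Finset.range K, ∫ x in E k, g i (x, a) ∂μ) +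
            ∫ x in (U K)ᶜ, g i (x, a) ∂μ)|
          = |((∑ k ∈ Finset.range K, ∫ x in E k, g i (x, as n) ∂μn) -
              (∑ k ∈ Finset.range K, ∫ x in E k, g i (x, a) ∂μ)) +
              ((∫ x in (U K)ᶜ, g i (x, as n) ∂μn) - ∫ x in (U K)ᶜ, g i (x, a) ∂μ)| := by
            ring_nf
        _ ≤ |((∑ k ∈ Finset.range K, ∫ x in E k, g i (x, as n) ∂μn) -
              (∑ k ∈ Finset.range K, ∫ x in E k, g i (x, a) ∂μ))| +
            |(∫ x in (U K)ᶜ, g i (x, as n) ∂μn) - ∫ x in (U K)ᶜ, g i (x, a) ∂μ| := abs_add_le _ _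
        _ ≤ (∑ k ∈ Finset.range K, |(∫ x in E k, g i (x, as n) ∂μn) - ∫ x in E k, g i (x, a) ∂μ|) +
            (|∫ x in (U K)ᶜ, g i (x, as n) ∂μn| + |∫ x in (U K)ᶜ, g i (x, a) ∂μ|) :=
            add_le_add habs (abs_sub _ _)
        _ = _ := by ring
    refine hstep.trans ?_
    have hsum_bound : ∑ k ∈ Finset.range K,
        |(∫ x in E k, g i (x, as n) ∂μn) - ∫ x in E k, g i (x, a) ∂μ| ≤
        ε' * 1 + ε' + ε' * 1 := by
      calc ∑ k ∈ Finset.range K, |(∫ x in E k, g i (x, as n) ∂μn) - ∫ x in E k, g i (x, a) ∂μ|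
          ≤ ∑ k ∈ Finset.range K, (ε' * (μn (E k)).toReal +
            |(μn (E k)).toReal - (μ (E k)).toReal| + ε' * (μ (E k)).toReal) :=
            Finset.sum_le_sum hbound
        _ = ε' * (∑ k ∈ Finset.range K, (μn (E k)).toReal) +
            (∑ k ∈ Finset.range K, |(μn (E k)).toReal - (μ (E k)).toReal|) +
            ε' * (∑ k ∈ Finset.range K, (μ (E k)).toReal) := by
            rw [Finset.sum_add_distrib, Finset.sum_add_distrib, ← Finset.mul_sum, ← Finset.mul_sum]
        _ ≤ ε' * 1 + ε' + ε' * 1 := by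
            refine add_le_add (add_le_add ?_ h1.le) ?_
            · exact mul_le_mul_of_nonneg_left (hsumm μn) hε'.le
            · exact mul_le_mul_of_nonneg_left (hsumm μ) hε'.le
    have htail1 := (htail (as n) μn hμn).trans h2.le
    have htail2 := (htail a μ hμ).trans hzUc.le
    calc (∑ k ∈ Finset.range K, |(∫ x in E k, g i (x, as n) ∂μn) - ∫ x in E k, g i (x, a) ∂μ|) +
        |∫ x in (U K)ᶜ, g i (x, as n) ∂μn| + |∫ x in (U K)ᶜ, g i (x, a) ∂μ|
        ≤ (ε' * 1 + ε' + ε' * 1) + ε' + ε' := by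
          exact add_le_add (add_le_add hsum_bound htail1) htail2
      _ = 5 * ε' := by ring
  -- conclude
  have hsup_le : (⨆ i, |(∫ x, g i (x, as n) ∂(zs n : Measure X)) -
      ∫ x, g i (x, a) ∂(z : Measure X)|) ≤ 5 * ε' := ciSup_le hmain
  have hsup_nonneg : 0 ≤ ⨆ i, |(∫ x, g i (x, as n) ∂(zs n : Measure X)) -
      ∫ x, g i (x, a) ∂(z : Measure X)| := by
    obtain ⟨i₀⟩ := (inferInstance : Nonempty I)
    refine le_trans (abs_nonneg _) (le_ciSup (f := fun j => |(∫ x, g j (x, as n) ∂(zs n : Measure X)) -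
      ∫ x, g j (x, a) ∂(z : Measure X)|) ⟨2, ?_⟩ i₀)
    rintro t ⟨j, rfl⟩
    exact hbd2 n j
  rw [Real.norm_eq_abs, abs_of_nonneg hsup_nonneg]
  calc (⨆ i, |(∫ x, g i (x, as n) ∂(zs n : Measure X)) -
      ∫ x, g i (x, a) ∂(z : Measure X)|) ≤ 5 * ε' := hsup_le
    _ < ε := by rw [hε'def]; linarith

/-- **Theorem (total variation continuity of `R'` for MDMIIs).**
Let `X = Y × W` with `Y` the observable and `W` the unobservable component, and let
`P(dx'|x,a)` be a stochastic kernel on `X` given `X×A`. If for each nonempty open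
`O ⊆ W` the family `{(x,a) ↦ P(C×O|x,a) : C Borel in Y}` is equicontinuous at every
point `(x,a) ∈ X×A`, then the kernel `R'(C|z,a) = ∫_X P(C×W|x,a) z(dx)` on `Y` given
`P(X)×A` is continuous in total variation: whenever `z⁽ⁿ⁾ → z` weakly and `a⁽ⁿ⁾ → a`,
`sup_{C Borel in Y} |R'(C|z⁽ⁿ⁾,a⁽ⁿ⁾) − R'(C|z,a)| → 0`. -/
theorem mdmii_Rprime_totalVariation_continuous {Y W A : Type*}
    [MetricSpace Y] [SecondCountableTopology Y] [MeasurableSpace Y] [BorelSpace Y]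
    [MetricSpace W] [SecondCountableTopology W] [MeasurableSpace W] [BorelSpace W]
    [MetricSpace A] [SecondCountableTopology A] [MeasurableSpace A] [BorelSpace A]
    (P : (Y × W) × A → ProbabilityMeasure (Y × W))
    (hPmeas : Measurable fun p => (P p : Measure (Y × W)))
    (hequi : ∀ O : Set W, IsOpen O → O.Nonempty →
      ∀ p₀ : (Y × W) × A,
        Tendsto (fun p : (Y × W) × A =>
            ⨆ C : {C : Set Y // MeasurableSet C},
              |((P p : Measure (Y × W)) (C.1 ×ˢ O)).toReal -
                ((P p₀ : Measure (Y × W)) (C.1 ×ˢ O)).toReal|)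
          (𝓝 p₀) (𝓝 0)) :
    ∀ (zs : ℕ → ProbabilityMeasure (Y × W)) (z : ProbabilityMeasure (Y × W))
      (as : ℕ → A) (a : A),
      Tendsto zs atTop (𝓝 z) → Tendsto as atTop (𝓝 a) →
      Tendsto (fun n => ⨆ C : {C : Set Y // MeasurableSet C},
          |(∫⁻ x, (P (x, as n) : Measure (Y × W)) (C.1 ×ˢ (Set.univ : Set W))
              ∂(zs n : Measure (Y × W))).toReal -
            (∫⁻ x, (P (x, a) : Measure (Y × W)) (C.1 ×ˢ (Set.univ : Set W))
              ∂(z : Measure (Y × W))).toReal|)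
        atTop (𝓝 0) := by
  
  intro zs z as a hz ha
  haveI hIne : Nonempty {C : Set Y // MeasurableSet C} := ⟨⟨∅, MeasurableSet.empty⟩⟩
  haveI hWne : Nonempty W := by
    have : Nonempty (Y × W) := z.nonempty
    exact ⟨(Classical.arbitrary (Y × W)).2⟩
  have hmeas : ∀ (C : {C : Set Y // MeasurableSet C}) (c : A),
      Measurable fun x : Y × W =>
        ((P (x, c) : Measure (Y × W)) (C.1 ×ˢ (Set.univ : Set W))).toReal := by
    intro C c
    have h1 : Measurable fun p : (Y × W) × A =>
        ((P p : Measure (Y × W)) (C.1 ×ˢ (Set.univ : Set W))) :=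
      (Measure.measurable_coe (C.2.prod MeasurableSet.univ)).comp hPmeas
    exact (ENNReal.measurable_toReal.comp h1).comp (measurable_id.prodMk measurable_const)
  have hg1 : ∀ (C : {C : Set Y // MeasurableSet C}) (p : (Y × W) × A),
      ((P p : Measure (Y × W)) (C.1 ×ˢ (Set.univ : Set W))).toReal ≤ 1 := by
    intro C p
    have h1 : (P p : Measure (Y × W)) (C.1 ×ˢ (Set.univ : Set W)) ≤ 1 := prob_le_one
    calc ((P p : Measure (Y × W)) (C.1 ×ˢ (Set.univ : Set W))).toReal
        ≤ (1 : ℝ≥0∞).toReal := ENNReal.toReal_mono ENNReal.one_ne_top h1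
      _ = 1 := by simp
  have hrw : ∀ (c : A) (ν : Measure (Y × W)) [IsProbabilityMeasure ν]
      (C : {C : Set Y // MeasurableSet C}),
      (∫⁻ x, (P (x, c) : Measure (Y × W)) (C.1 ×ˢ (Set.univ : Set W)) ∂ν).toReal =
        ∫ x, ((P (x, c) : Measure (Y × W)) (C.1 ×ˢ (Set.univ : Set W))).toReal ∂ν := by
    intro c ν _ C
    rw [← integral_toReal]
    · exact ((Measure.measurable_coe (C.2.prod MeasurableSet.univ)).comp
        (hPmeas.comp (measurable_id.prodMk measurable_const))).aemeasurable
    · exact Filter.Eventually.of_forall fun x => measure_lt_top _ _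
  have haux := mdmii_aux
    (fun (C : {C : Set Y // MeasurableSet C}) (p : (Y × W) × A) =>
      ((P p : Measure (Y × W)) (C.1 ×ˢ (Set.univ : Set W))).toReal)
    hmeas (fun C p => ENNReal.toReal_nonneg) hg1
    (hequi Set.univ isOpen_univ Set.univ_nonempty) zs z as a hz ha
  refine haux.congr fun n => ?_
  refine congrArg iSup (funext fun C => ?_)
  haveI : IsProbabilityMeasure (zs n : Measure (Y × W)) := (zs n).2
  haveI : IsProbabilityMeasure (z : Measure (Y × W)) := z.2
  rw [hrw (as n) (zs n : Measure (Y × W)) C, hrw a (z : Measure (Y × W)) C]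
end
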